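/- arXiv:1407.0175 — 6 statements merged into one kernel-verified Lean document; each statement's English description precedes it below -/
import Mathlib

section
/- If Q is a structurally complete quasivariety, then every nontrivial algebra B in Q admits a homomorphism into some elementary extension of the free algebra F of denumerable rank for Q. -/
open FirstOrder Language

universe u

/-- A quasi-identity `∀ x̄ [⋀ i, lhs i ≐ rhs i → cl ≐ cr]` in `k` variables with `n` premises. -/
structure QuasiId (L : FirstOrder.Language.{u, u}) where
  k : ℕ
  n : ℕ
  lhs : Fin n → L.Term (Fin k)
  rhs : Fin n → L.Term (Fin k)
  cl : L.Term (Fin k)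
  cr : L.Term (Fin k)

variable {L : FirstOrder.Language.{u, u}}

/-- Satisfaction of a quasi-identity in an algebra. -/
def QuasiId.Holds (q : QuasiId L) (M : Type u) [L.Structure M] : Prop :=
  ∀ x : Fin q.k → M,
    (∀ i, (q.lhs i).realize x = (q.rhs i).realize x) →
      q.cl.realize x = q.cr.realize x

/-- Satisfiability of the premise of a quasi-identity in an algebra. -/
def QuasiId.PremiseSat (q : QuasiId L) (M : Type u) [L.Structure M] : Prop :=
  ∃ x : Fin q.k → M, ∀ i, (q.lhs i).realize x = (q.rhs i).realize x

/-- An identity `∀ x̄, lhs ≐ rhs`. -/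
structure EqId (L : FirstOrder.Language.{u, u}) where
  k : ℕ
  lhs : L.Term (Fin k)
  rhs : L.Term (Fin k)

def EqId.Holds (e : EqId L) (M : Type u) [L.Structure M] : Prop :=
  ∀ x : Fin e.k → M, e.lhs.realize x = e.rhs.realize x

/-- A quasivariety: a class of algebras axiomatized by a set of quasi-identities. -/
def IsQuasivariety (Q : ∀ M : Type u, L.Structure M → Prop) : Prop :=
  ∃ S : Set (QuasiId L), ∀ (M : Type u) (iM : L.Structure M),
    Q M iM ↔ ∀ q ∈ S, @QuasiId.Holds L q M iM

/-- A variety: a class of algebras axiomatized by a set of identities. -/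
def IsVariety (V : ∀ M : Type u, L.Structure M → Prop) : Prop :=
  ∃ S : Set (EqId L), ∀ (M : Type u) (iM : L.Structure M),
    V M iM ↔ ∀ e ∈ S, @EqId.Holds L e M iM

/-- `F` is free for the class `Q` over the denumerable set of free generators `g 0, g 1, …`. -/
def IsFreeAlgOn (Q : ∀ M : Type u, L.Structure M → Prop)
    (F : Type u) [iF : L.Structure F] (g : ℕ → F) : Prop :=
  Q F iF ∧ Function.Injective g ∧
    ∀ (A : Type u) (iA : L.Structure A), Q A iA → ∀ f : ℕ → A,
      ∃! h : @Language.Hom L F A iF iA, ∀ m, h.toFun (g m) = f m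

/-- Structural completeness: every quasi-identity true in the free algebra `F` holds in `Q`. -/
def IsSC (Q : ∀ M : Type u, L.Structure M → Prop) (F : Type u) [L.Structure F] : Prop :=
  ∀ q : QuasiId L, q.Holds F →
    ∀ (M : Type u) (iM : L.Structure M), Q M iM → @QuasiId.Holds L q M iM

/-- Almost structural completeness: every active (premise satisfiable in `F`) quasi-identity
true in the free algebra `F` holds in `Q`. -/
def IsASC (Q : ∀ M : Type u, L.Structure M → Prop) (F : Type u) [L.Structure F] : Prop :=
  ∀ q : QuasiId L, q.Holds F → q.PremiseSat F →
    ∀ (M : Type u) (iM : L.Structure M), Q M iM → @QuasiId.Holds L q M iM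

/-- An idempotent element: forms a one-element subalgebra. -/
def IsIdemElem (M : Type u) [L.Structure M] (e : M) : Prop :=
  ∀ (m : ℕ) (f : L.Functions m), Structure.funMap f (fun _ : Fin m => e) = e

/-- Some elementary extension of `F` contains an idempotent element. -/
def HasIdemElemExtension (F : Type u) [iF : L.Structure F] : Prop :=
  ∃ (G : Type u) (iG : L.Structure G),
    Nonempty (@Language.ElementaryEmbedding L F G iF iG) ∧ ∃ e : G, @IsIdemElem L G iG e

/-- `r` is a `Q`-congruence of `S`: the kernel of a homomorphism into a member of `Q`
(equivalently, a congruence with quotient in `Q`). -/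
def IsQCong (Q : ∀ M : Type u, L.Structure M → Prop) (S : Type u) [iS : L.Structure S]
    (r : S → S → Prop) : Prop :=
  ∃ (A : Type u) (iA : L.Structure A), Q A iA ∧
    ∃ h : @Language.Hom L S A iS iA, ∀ a b, r a b ↔ h.toFun a = h.toFun b

/-- `S` is `Q`-simple: nontrivial, in `Q`, and its only `Q`-congruences are equality and the
total relation. -/
def IsQSimple (Q : ∀ M : Type u, L.Structure M → Prop) (S : Type u) [iS : L.Structure S] : Prop :=
  Nontrivial S ∧ Q S iS ∧
    ∀ r : S → S → Prop, IsQCong Q S r → (∀ a b, r a b ↔ a = b) ∨ (∀ a b, r a b)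

/-- `S` is `Q`-subdirectly irreducible: equality is completely meet-irreducible among the
`Q`-congruences of `S`. -/
def IsQSubdirectlyIrreducible (Q : ∀ M : Type u, L.Structure M → Prop)
    (S : Type u) [iS : L.Structure S] : Prop :=
  Nontrivial S ∧ Q S iS ∧
    ∀ (ι : Type u) (R : ι → S → S → Prop), (∀ i, IsQCong Q S (R i)) →
      (∀ a b, ((∀ i, R i a b) ↔ a = b)) → ∃ i, ∀ a b, R i a b ↔ a = b

/-- `Q` is semisimple: all `Q`-subdirectly irreducible algebras are `Q`-simple. -/
def IsSemisimple (Q : ∀ M : Type u, L.Structure M → Prop) : Prop :=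
  ∀ (S : Type u) (iS : L.Structure S),
    @IsQSubdirectlyIrreducible L Q S iS → @IsQSimple L Q S iS

def SubclassOf (Q' Q : ∀ M : Type u, L.Structure M → Prop) : Prop :=
  ∀ (M : Type u) (iM : L.Structure M), Q' M iM → Q M iM

/-- A minimal quasivariety: nontrivial, and every subquasivariety is trivial or the whole class. -/
def IsMinimalQuasivariety (Q : ∀ M : Type u, L.Structure M → Prop) : Prop :=
  (∃ (M : Type u) (iM : L.Structure M), Q M iM ∧ Nontrivial M) ∧
    ∀ Q' : ∀ M : Type u, L.Structure M → Prop, IsQuasivariety Q' → SubclassOf Q' Q →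
      (∀ (M : Type u) (iM : L.Structure M), Q' M iM → Subsingleton M) ∨
        (∀ (M : Type u) (iM : L.Structure M), Q M iM ↔ Q' M iM)

/-- A minimal variety: nontrivial, and every subvariety is trivial or the whole class. -/
def IsMinimalVariety (V : ∀ M : Type u, L.Structure M → Prop) : Prop :=
  (∃ (M : Type u) (iM : L.Structure M), V M iM ∧ Nontrivial M) ∧
    ∀ V' : ∀ M : Type u, L.Structure M → Prop, IsVariety V' → SubclassOf V' V →
      (∀ (M : Type u) (iM : L.Structure M), V' M iM → Subsingleton M) ∨
        (∀ (M : Type u) (iM : L.Structure M), V M iM ↔ V' M iM)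

/-- `t` interprets as the discriminator operation on `M`. -/
def IsDiscrTermOn (t : L.Term (Fin 3)) (M : Type u) [L.Structure M] : Prop :=
  ∀ a b c : M, (a ≠ b → t.realize ![a, b, c] = a) ∧ (a = b → t.realize ![a, b, c] = c)

/-- `V` is the variety generated by the class `K`. -/
def IsVarietyGeneratedBy (V K : ∀ M : Type u, L.Structure M → Prop) : Prop :=
  IsVariety V ∧ SubclassOf K V ∧ ∀ W, IsVariety W → SubclassOf K W → SubclassOf V W

/-- A discriminator variety: generated by a class of algebras with a common discriminator term. -/
def IsDiscriminatorVariety (V : ∀ M : Type u, L.Structure M → Prop) : Prop :=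
  ∃ (K : ∀ M : Type u, L.Structure M → Prop) (t : L.Term (Fin 3)),
    (∀ (M : Type u) (iM : L.Structure M), K M iM → @IsDiscrTermOn L t M iM) ∧
      IsVarietyGeneratedBy V K

/-- A congruence of an algebra. -/
def IsCongruence (M : Type u) [L.Structure M] (r : M → M → Prop) : Prop :=
  Equivalence r ∧ ∀ (m : ℕ) (f : L.Functions m) (a b : Fin m → M),
    (∀ i, r (a i) (b i)) → r (Structure.funMap f a) (Structure.funMap f b)

/-- A simple algebra: nontrivial with only trivial congruences. -/
def IsSimpleAlg (M : Type u) [L.Structure M] : Prop :=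
  Nontrivial M ∧ ∀ r : M → M → Prop, IsCongruence (L := L) M r →
    (∀ a b, r a b ↔ a = b) ∨ (∀ a b, r a b)

/-- `P` is `Q`-finitely presented: presented in `Q` by finitely many generators `v` and
finitely many relations `lhs i ≐ rhs i`. -/
def IsQFinPresented (Q : ∀ M : Type u, L.Structure M → Prop)
    (P : Type u) [iP : L.Structure P] : Prop :=
  Q P iP ∧ ∃ (k n : ℕ) (lhs rhs : Fin n → L.Term (Fin k)) (v : Fin k → P),
    (∀ i, (lhs i).realize v = (rhs i).realize v) ∧
    ∀ (A : Type u) (iA : L.Structure A), Q A iA → ∀ x : Fin k → A,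
      (∀ i, @Term.realize L A iA (Fin k) x (lhs i) = @Term.realize L A iA (Fin k) x (rhs i)) →
        ∃! h : @Language.Hom L P A iP iA, ∀ j, h.toFun (v j) = x j

/-- The coordinatewise structure on a direct product of algebras. -/
def piStruct {ι : Type u} {M : ι → Type u} (iM : ∀ i, L.Structure (M i)) :
    L.Structure (∀ i, M i) where
  funMap := fun {m} f x i => @Structure.funMap L (M i) (iM i) m f (fun j => x j i)
  RelMap := fun {m} r x => ∀ i, @Structure.RelMap L (M i) (iM i) m r (fun j => x j i)

instance piStructure {ι : Type u} {M : ι → Type u} [∀ i, L.Structure (M i)] :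
    L.Structure (∀ i, M i) :=
  piStruct fun i => inferInstance

theorem stmt_0 {L : FirstOrder.Language.{u, u}} [L.IsAlgebraic]
    (Q : ∀ M : Type u, L.Structure M → Prop) (hQ : IsQuasivariety Q)
    (F : Type u) [iF : L.Structure F] (g : ℕ → F) (hF : IsFreeAlgOn Q F g)
    (hSC : IsSC Q F)
    (B : Type u) [iB : L.Structure B] (hQB : Q B iB) (hB : Nontrivial B) :
    ∃ (G : Type u) (iG : L.Structure G),
      Nonempty (@FirstOrder.Language.ElementaryEmbedding L F G iF iG) ∧
        Nonempty (@FirstOrder.Language.Hom L B G iB iG) := by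
  classical
  obtain ⟨⟨b0, b1, hb01⟩⟩ := hB
  haveI : Nonempty F := ⟨g 0⟩
  -- Constraints: a function symbol together with a tuple of arguments from `B`.
  -- A map `x : B → F` "satisfies" a constraint if it commutes with that function application.
  have key : ∀ s : Finset (Σ m : ℕ, L.Functions m × (Fin m → B)), ∃ x : B → F,
      ∀ c ∈ s, Structure.funMap c.2.1 (fun i => x (c.2.2 i))
        = x (Structure.funMap c.2.1 c.2.2) := by
    intro s
    set elems : Finset B :=
      insert b0 (insert b1 (s.biUnion fun c =>
        insert (Structure.funMap c.2.1 c.2.2) (Finset.univ.image c.2.2))) with helems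
    have hb0 : b0 ∈ elems := Finset.mem_insert_self _ _
    have hb1 : b1 ∈ elems :=
      Finset.mem_insert_of_mem (Finset.mem_insert_self _ _)
    have hval : ∀ c ∈ s, Structure.funMap c.2.1 c.2.2 ∈ elems := fun c hc =>
      Finset.mem_insert_of_mem (Finset.mem_insert_of_mem
        (Finset.mem_biUnion.2 ⟨c, hc, Finset.mem_insert_self _ _⟩))
    have harg : ∀ c ∈ s, ∀ i, c.2.2 i ∈ elems := fun c hc i =>
      Finset.mem_insert_of_mem (Finset.mem_insert_of_mem
        (Finset.mem_biUnion.2 ⟨c, hc, Finset.mem_insert_of_mem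
          (Finset.mem_image.2 ⟨i, Finset.mem_univ i, rfl⟩)⟩))
    set E := elems.equivFin with hE
    set sE := s.equivFin with hsE
    -- The quasi-identity whose premises are the constraints in `s`, concluding `b0 = b1`.
    set q : QuasiId L :=
      { k := elems.card
        n := s.card
        lhs := fun i => Term.func (sE.symm i).1.2.1
          (fun j => Term.var (E ⟨(sE.symm i).1.2.2 j, harg _ (sE.symm i).2 j⟩))
        rhs := fun i => Term.var
          (E ⟨Structure.funMap (sE.symm i).1.2.1 (sE.symm i).1.2.2, hval _ (sE.symm i).2⟩)
        cl := Term.var (E ⟨b0, hb0⟩)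
        cr := Term.var (E ⟨b1, hb1⟩) } with hq
    by_cases hsat : ∃ y : Fin elems.card → F,
        ∀ i, (q.lhs i).realize y = (q.rhs i).realize y
    · obtain ⟨y, hy⟩ := hsat
      refine ⟨fun b => if hb : b ∈ elems then y (E ⟨b, hb⟩) else g 0, ?_⟩
      have main : ∀ i : Fin s.card,
          Structure.funMap (sE.symm i).1.2.1
              (fun j => (fun b => if hb : b ∈ elems then y (E ⟨b, hb⟩) else g 0)
                ((sE.symm i).1.2.2 j))
            = (fun b => if hb : b ∈ elems then y (E ⟨b, hb⟩) else g 0)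
              (Structure.funMap (sE.symm i).1.2.1 (sE.symm i).1.2.2) := by
        intro i
        have h := hy i
        simp only [q, Term.realize] at h
        have hR : (fun b => if hb : b ∈ elems then y (E ⟨b, hb⟩) else g 0)
            (Structure.funMap (sE.symm i).1.2.1 (sE.symm i).1.2.2)
            = y (E ⟨Structure.funMap (sE.symm i).1.2.1 (sE.symm i).1.2.2,
                hval _ (sE.symm i).2⟩) :=
          dif_pos (hval _ (sE.symm i).2)
        have hL : (fun j => (fun b => if hb : b ∈ elems then y (E ⟨b, hb⟩) else g 0)
            ((sE.symm i).1.2.2 j))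
            = fun j => y (E ⟨(sE.symm i).1.2.2 j, harg _ (sE.symm i).2 j⟩) :=
          funext fun j => dif_pos (harg _ (sE.symm i).2 j)
        rw [hR, hL]
        exact h
      intro c hc
      have h2 := main (sE ⟨c, hc⟩)
      rwa [Equiv.symm_apply_apply] at h2
    · have hqF : q.Holds F := fun y hy => absurd ⟨y, hy⟩ hsat
      have hqB := hSC q hqF B iB hQB
      exfalso
      apply hb01
      have h3 := hqB (fun i => ((E.symm i : elems) : B)) ?_
      · simpa only [q, Term.realize, Equiv.symm_apply_apply] using h3
      · intro i
        simp only [q, Term.realize, Equiv.symm_apply_apply]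
  choose x hx using key
  haveI hne : (Filter.atTop : Filter (Finset (Σ m : ℕ, L.Functions m × (Fin m → B)))).NeBot :=
    Filter.atTop_neBot
  set U : Ultrafilter (Finset (Σ m : ℕ, L.Functions m × (Fin m → B))) :=
    Ultrafilter.of Filter.atTop with hU
  refine ⟨Filter.Product (U : Filter (Finset (Σ m : ℕ, L.Functions m × (Fin m → B)))) (fun _ => F), inferInstance,
    ⟨⟨fun a => (↑(fun _ : Finset (Σ m : ℕ, L.Functions m × (Fin m → B)) => a) : Filter.Product (U : Filter (Finset (Σ m : ℕ, L.Functions m × (Fin m → B)))) (fun _ => F)), ?_⟩⟩,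
    ⟨⟨fun b => (↑(fun s : Finset (Σ m : ℕ, L.Functions m × (Fin m → B)) => x s b) : Filter.Product (U : Filter (Finset (Σ m : ℕ, L.Functions m × (Fin m → B)))) (fun _ => F)), ?_, ?_⟩⟩⟩
  · -- elementary embedding via Łoś
    intro n φ v
    have h := Ultraproduct.realize_formula_cast (u := U) φ (fun i (_ : Finset (Σ m : ℕ, L.Functions m × (Fin m → B))) => v i)
    rw [show ((fun a => (↑(fun _ : Finset (Σ m : ℕ, L.Functions m × (Fin m → B)) => a) : Filter.Product (U : Filter (Finset (Σ m : ℕ, L.Functions m × (Fin m → B)))) (fun _ => F))) ∘ v)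
        = fun i => (↑((fun i (_ : Finset (Σ m : ℕ, L.Functions m × (Fin m → B))) => v i) i) : Filter.Product (U : Filter (Finset (Σ m : ℕ, L.Functions m × (Fin m → B)))) (fun _ => F)) from rfl]
    refine h.trans ?_
    exact Filter.eventually_const
  · -- hom: map_fun'
    intro n f yy
    letI := (U : Filter (Finset (Σ m : ℕ, L.Functions m × (Fin m → B)))).productSetoid
      (fun _ : Finset (Σ m : ℕ, L.Functions m × (Fin m → B)) => F)
    show (↑(fun s : Finset (Σ m : ℕ, L.Functions m × (Fin m → B)) => x s (Structure.funMap f yy)) : Filter.Product (U : Filter (Finset (Σ m : ℕ, L.Functions m × (Fin m → B)))) (fun _ => F))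
      = Structure.funMap f (fun i => (↑(fun s : Finset (Σ m : ℕ, L.Functions m × (Fin m → B)) => x s (yy i)) : Filter.Product (U : Filter (Finset (Σ m : ℕ, L.Functions m × (Fin m → B)))) (fun _ => F)))
    rw [Ultraproduct.funMap_cast (u := U) f (fun i s => x s (yy i))]
    apply Quotient.sound'
    have hev : ∀ᶠ s in (Filter.atTop : Filter (Finset (Σ m : ℕ, L.Functions m × (Fin m → B)))),
        x s (Structure.funMap f yy) = Structure.funMap f (fun i => x s (yy i)) := by
      rw [Filter.eventually_atTop]
      exact ⟨{⟨n, f, yy⟩}, fun t ht =>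
        (hx t ⟨n, f, yy⟩ (Finset.singleton_subset_iff.1 ht)).symm⟩
    exact hev.filter_mono (Ultrafilter.of_le _)
  · -- map_rel': no relation symbols
    intro n r
    exact isEmptyElim r
end

section
/- Let Q be an almost structurally complete quasivariety with denumerably generated free algebra F. Then the following are equivalent: (1) Q is structurally complete; (2) every nontrivial algebra in Q admits a homomorphism into some elementary extension of F; (3) every nontrivial Q-finitely presented algebra admits a homomorphism into F. -/
open FirstOrder Language

universe u

variable {L : FirstOrder.Language.{u, u}}

namespace ASCAux

open Structure

variable {L : FirstOrder.Language.{u, u}}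

section PAlg

variable (Q : ∀ M : Type u, L.Structure M → Prop) {k n : ℕ}
  (lhs rhs : Fin n → L.Term (Fin k))

/-- Two terms are identified iff they are equal under every interpretation in `Q`
satisfying the premises. -/
def prel (t s : L.Term (Fin k)) : Prop :=
  ∀ (B : Type u) (iB : L.Structure B), Q B iB → ∀ x : Fin k → B,
    (∀ i, @Term.realize L B iB _ x (lhs i) = @Term.realize L B iB _ x (rhs i)) →
      @Term.realize L B iB _ x t = @Term.realize L B iB _ x s

def psetoid : Setoid (L.Term (Fin k)) :=
  ⟨prel Q lhs rhs,
    ⟨fun _ _ _ _ _ _ => rfl,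
     fun h B iB hB x hx => (h B iB hB x hx).symm,
     fun h1 h2 B iB hB x hx => (h1 B iB hB x hx).trans (h2 B iB hB x hx)⟩⟩

def PAlg : Type u := Quotient (psetoid Q lhs rhs)

def pmk (t : L.Term (Fin k)) : PAlg Q lhs rhs := Quotient.mk (psetoid Q lhs rhs) t

noncomputable instance : L.Structure (PAlg Q lhs rhs) where
  funMap {m} f x := pmk Q lhs rhs (Term.func f fun j => (x j).out)
  RelMap {m} _ _ := False

theorem prel_out_mk (t : L.Term (Fin k)) : prel Q lhs rhs (pmk Q lhs rhs t).out t :=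
  Quotient.exact (Quotient.out_eq (pmk Q lhs rhs t))

theorem realize_pmk {γ : Type*} (y : γ → PAlg Q lhs rhs) (t : L.Term γ) :
    Term.realize y t = pmk Q lhs rhs (t.subst fun j => (y j).out) := by
  induction t with
  | var j =>
    show y j = pmk Q lhs rhs ((y j).out)
    exact (Quotient.out_eq (y j)).symm
  | func f ts ih =>
    show funMap f (fun j => Term.realize y (ts j)) = _
    simp only [ih]
    show pmk Q lhs rhs (Term.func f fun j => (pmk Q lhs rhs _).out) = _
    apply Quotient.sound
    intro B iB hB x hx
    show Term.realize x (Term.func f _) = Term.realize x (Term.func f _)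
    simp only [Term.realize]
    congr 1
    funext j
    exact prel_out_mk Q lhs rhs _ B iB hB x hx

def pvar : Fin k → PAlg Q lhs rhs := fun j => pmk Q lhs rhs (Term.var j)

theorem realize_pvar (t : L.Term (Fin k)) :
    Term.realize (pvar Q lhs rhs) t = pmk Q lhs rhs t := by
  rw [realize_pmk]
  apply Quotient.sound
  intro B iB hB x hx
  rw [Term.realize_subst]
  have hxx : (fun j => Term.realize x ((pvar Q lhs rhs j).out)) = x := by
    funext j
    exact prel_out_mk Q lhs rhs (Term.var j) B iB hB x hx
  rw [hxx]

theorem palg_prem (i : Fin n) :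
    Term.realize (pvar Q lhs rhs) (lhs i) = Term.realize (pvar Q lhs rhs) (rhs i) := by
  rw [realize_pvar, realize_pvar]
  exact Quotient.sound (fun B iB hB x hx => hx i)

theorem palg_holds (q' : QuasiId L)
    (hq' : ∀ (B : Type u) (iB : L.Structure B), Q B iB → @QuasiId.Holds L q' B iB) :
    QuasiId.Holds q' (PAlg Q lhs rhs) := by
  intro y hy
  rw [realize_pmk, realize_pmk]
  apply Quotient.sound
  intro B iB hB x hx
  rw [Term.realize_subst, Term.realize_subst]
  apply hq' B iB hB (fun j => Term.realize x ((y j).out))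
  intro i
  have h := Quotient.exact ((realize_pmk Q lhs rhs y (q'.lhs i)).symm.trans
    ((hy i).trans (realize_pmk Q lhs rhs y (q'.rhs i))))
  have h2 := h B iB hB x hx
  rwa [Term.realize_subst, Term.realize_subst] at h2

noncomputable def toHom (B : Type u) (iB : L.Structure B) (hB : Q B iB) (x : Fin k → B)
    (hx : ∀ i, @Term.realize L B iB _ x (lhs i) = @Term.realize L B iB _ x (rhs i)) :
    @Language.Hom L (PAlg Q lhs rhs) B inferInstance iB :=
  letI := iB
  { toFun := Quotient.lift (fun t => Term.realize x t)
      (fun _ _ (h : prel Q lhs rhs _ _) => h B iB hB x hx)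
    map_fun' := by
      intro m f xs
      show Term.realize x (Term.func f fun j => (xs j).out) = _
      simp only [Term.realize]
      show _ = funMap f fun j => Quotient.lift (fun t => Term.realize x t)
        (fun _ _ (h : prel Q lhs rhs _ _) => h B iB hB x hx) (xs j)
      congr 1
      funext j
      conv_rhs => rw [← Quotient.out_eq (xs j)]
      rfl
    map_rel' := by
      intro m r xs h
      exact False.elim h }

theorem toHom_mk (B : Type u) (iB : L.Structure B) (hB : Q B iB) (x : Fin k → B)
    (hx : ∀ i, @Term.realize L B iB _ x (lhs i) = @Term.realize L B iB _ x (rhs i))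
    (t : L.Term (Fin k)) :
    (toHom Q lhs rhs B iB hB x hx).toFun (pmk Q lhs rhs t) =
      @Term.realize L B iB _ x t := rfl

end PAlg

theorem sc_key {k n : ℕ} (Q : ∀ M : Type u, L.Structure M → Prop)
    (F : Type u) [iF : L.Structure F] (hSC : IsSC Q F)
    (lhs rhs : Fin n → L.Term (Fin k))
    (hns : ¬ ∃ x : Fin k → F, ∀ i, Term.realize x (lhs i) = Term.realize x (rhs i))
    (M : Type u) (iM : L.Structure M) (hM : Q M iM) (x : Fin k → M)
    (hx : ∀ i, @Term.realize L M iM _ x (lhs i) = @Term.realize L M iM _ x (rhs i))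
    (a b : M) : a = b := by
  classical
  letI := iM
  set qq : QuasiId L :=
    ⟨k + 2, n, fun i => (lhs i).relabel (Fin.castAdd 2),
      fun i => (rhs i).relabel (Fin.castAdd 2),
      Term.var ⟨k, by omega⟩, Term.var ⟨k + 1, by omega⟩⟩ with hqq
  have hqF : qq.Holds F := by
    intro y hy
    refine (hns ⟨y ∘ Fin.castAdd 2, fun i => ?_⟩).elim
    have h := hy i
    have h' : Term.realize y ((lhs i).relabel (Fin.castAdd 2)) =
      Term.realize y ((rhs i).relabel (Fin.castAdd 2)) := h
    rw [Term.realize_relabel, Term.realize_relabel] at h'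
    exact h'
  have hMq := hSC qq hqF M iM hM
  set y : Fin (k + 2) → M := fun j =>
    if h : (j : ℕ) < k then x ⟨j, h⟩ else if (j : ℕ) = k then a else b with hy
  have hcomp : (y ∘ Fin.castAdd 2) = x := by
    funext j
    simp only [hy, Function.comp_apply, Fin.coe_castAdd, j.isLt, dif_pos, Fin.eta]
  have hprem : ∀ i, Term.realize y (qq.lhs i) = Term.realize y (qq.rhs i) := by
    intro i
    show Term.realize y ((lhs i).relabel (Fin.castAdd 2)) =
      Term.realize y ((rhs i).relabel (Fin.castAdd 2))
    rw [Term.realize_relabel, Term.realize_relabel, hcomp]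
    exact hx i
  have hc := hMq y hprem
  have ha : y ⟨k, by omega⟩ = a := by
    simp only [hy]
    rw [dif_neg (by simp), if_pos (by simp)]
  have hb : y ⟨k + 1, by omega⟩ = b := by
    simp only [hy]
    rw [dif_neg (by omega), if_neg (by omega)]
  rw [← ha, ← hb]
  exact hc


section Ultra

open FirstOrder Language

variable {ι : Type u} (U : Ultrafilter ι) (F : Type u) [iF : L.Structure F] [Nonempty F]

noncomputable def diagEE :
    @Language.ElementaryEmbedding L F ((U : Filter ι).Product fun _ => F) iF inferInstance :=
  { toFun := fun a => ((fun _ : ι => a : ∀ _ : ι, F) : (U : Filter ι).Product fun _ => F)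
    map_formula' := by
      intro n φ v
      haveI : ∀ _ : ι, Nonempty F := fun _ => inferInstance
      have hco : ((fun a => ((fun _ : ι => a : ∀ _ : ι, F) :
          (U : Filter ι).Product fun _ => F)) ∘ v)
          = fun j => ((fun _ : ι => v j : ∀ _ : ι, F) : (U : Filter ι).Product fun _ => F) := rfl
      change Formula.Realize φ (fun j => ((fun _ : ι => v j : ∀ _ : ι, F) :
        (U : Filter ι).Product fun _ => F)) ↔ _
      rw [Ultraproduct.realize_formula_cast (x := fun j _ => v j)]
      simp only [Filter.eventually_const] }

noncomputable def ultraHom [L.IsAlgebraic] (B : Type u) (iB : L.Structure B) (y : ι → B → F)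
    (hy : ∀ (m : ℕ) (f : L.Functions m) (xs : Fin m → B),
      ∀ᶠ i in (U : Filter ι),
        y i (@Structure.funMap L B iB m f xs) = Structure.funMap f fun j => y i (xs j)) :
    @Language.Hom L B ((U : Filter ι).Product fun _ => F) iB inferInstance :=
  letI := iB
  { toFun := fun b => ((fun i => y i b : ∀ _ : ι, F) : (U : Filter ι).Product fun _ => F)
    map_fun' := by
      intro m f xs
      show ((fun i => y i (Structure.funMap f xs) : ∀ _ : ι, F) :
          (U : Filter ι).Product fun _ => F)
        = Structure.funMap f fun j => ((fun i => y i (xs j) : ∀ _ : ι, F) :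
          (U : Filter ι).Product fun _ => F)
      rw [Ultraproduct.funMap_cast]
      exact Quotient.sound' (hy m f xs)
    map_rel' := fun {m} r _ => isEmptyElim r }

end Ultra

end ASCAux
theorem stmt_1 {L : FirstOrder.Language.{u, u}} [L.IsAlgebraic]
    (Q : ∀ M : Type u, L.Structure M → Prop) (hQ : IsQuasivariety Q)
    (F : Type u) [iF : L.Structure F] (g : ℕ → F) (hF : IsFreeAlgOn Q F g)
    (hASC : IsASC Q F) :
    (IsSC Q F ↔
      ∀ (B : Type u) (iB : L.Structure B), Q B iB → Nontrivial B →
        ∃ (G : Type u) (iG : L.Structure G),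
          Nonempty (@FirstOrder.Language.ElementaryEmbedding L F G iF iG) ∧
            Nonempty (@FirstOrder.Language.Hom L B G iB iG)) ∧
    (IsSC Q F ↔
      ∀ (P : Type u) (iP : L.Structure P), @IsQFinPresented L Q P iP → Nontrivial P →
        Nonempty (@FirstOrder.Language.Hom L P F iP iF)) := by
  classical
  obtain ⟨S, hS⟩ := hQ
  haveI : Nonempty F := ⟨g 0⟩
  -- (3) implies SC
  have part3 : (∀ (P : Type u) (iP : L.Structure P), @IsQFinPresented L Q P iP → Nontrivial P →
      Nonempty (@FirstOrder.Language.Hom L P F iP iF)) → IsSC Q F := by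
    intro h3 q hqF M iM hM x hx
    by_cases hps : q.PremiseSat F
    · exact hASC q hqF hps M iM hM x hx
    · have hQP : Q (ASCAux.PAlg Q q.lhs q.rhs) inferInstance := by
        rw [hS]
        intro q' hq'
        exact ASCAux.palg_holds Q q.lhs q.rhs q' (fun B iB hB => (hS B iB).1 hB q' hq')
      have hfp : @IsQFinPresented L Q (ASCAux.PAlg Q q.lhs q.rhs) inferInstance := by
        refine ⟨hQP, q.k, q.n, q.lhs, q.rhs, ASCAux.pvar Q q.lhs q.rhs,
          fun i => ASCAux.palg_prem Q q.lhs q.rhs i, ?_⟩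
        intro A iA hA z hz
        refine ⟨ASCAux.toHom Q q.lhs q.rhs A iA hA z hz, fun j => rfl, ?_⟩
        intro h hh
        letI := iA
        refine DFunLike.coe_injective (funext fun p => ?_)
        induction p using Quotient.inductionOn with
        | h t =>
          have h3 : (⇑h ∘ ASCAux.pvar Q q.lhs q.rhs) = z := funext hh
          show (⇑h) (ASCAux.pmk Q q.lhs q.rhs t)
            = (ASCAux.toHom Q q.lhs q.rhs A iA hA z hz) (ASCAux.pmk Q q.lhs q.rhs t)
          calc (⇑h) (ASCAux.pmk Q q.lhs q.rhs t)
              = (⇑h) (Term.realize (ASCAux.pvar Q q.lhs q.rhs) t) :=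
                congrArg _ (ASCAux.realize_pvar Q q.lhs q.rhs t).symm
            _ = Term.realize (⇑h ∘ ASCAux.pvar Q q.lhs q.rhs) t :=
                (HomClass.realize_term h).symm
            _ = Term.realize z t := by rw [h3]
            _ = (ASCAux.toHom Q q.lhs q.rhs A iA hA z hz).toFun
                  (ASCAux.pmk Q q.lhs q.rhs t) :=
                (ASCAux.toHom_mk Q q.lhs q.rhs A iA hA z hz t).symm
      by_cases hnt : Nontrivial (ASCAux.PAlg Q q.lhs q.rhs)
      · obtain ⟨e⟩ := h3 _ inferInstance hfp hnt
        refine absurd ?_ hps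
        refine ⟨e.toFun ∘ ASCAux.pvar Q q.lhs q.rhs, fun i => ?_⟩
        have h1 := (HomClass.realize_term (v := ASCAux.pvar Q q.lhs q.rhs)
          (t := q.lhs i) e)
        have h2 := (HomClass.realize_term (v := ASCAux.pvar Q q.lhs q.rhs)
          (t := q.rhs i) e)
        show Term.realize (⇑e ∘ ASCAux.pvar Q q.lhs q.rhs) (q.lhs i)
          = Term.realize (⇑e ∘ ASCAux.pvar Q q.lhs q.rhs) (q.rhs i)
        rw [h1, h2, ASCAux.palg_prem Q q.lhs q.rhs i]
      · rw [not_nontrivial_iff_subsingleton] at hnt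
        have heq : ASCAux.pmk Q q.lhs q.rhs q.cl = ASCAux.pmk Q q.lhs q.rhs q.cr :=
          Subsingleton.elim _ _
        exact Quotient.exact heq M iM hM x hx
  -- (2) implies (3)
  have part2 : (∀ (B : Type u) (iB : L.Structure B), Q B iB → Nontrivial B →
      ∃ (G : Type u) (iG : L.Structure G),
        Nonempty (@FirstOrder.Language.ElementaryEmbedding L F G iF iG) ∧
          Nonempty (@FirstOrder.Language.Hom L B G iB iG)) →
      (∀ (P : Type u) (iP : L.Structure P), @IsQFinPresented L Q P iP → Nontrivial P →
        Nonempty (@FirstOrder.Language.Hom L P F iP iF)) := by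
    intro h2 P iP hfp hnt
    obtain ⟨hQP, k, n, lhs, rhs, v, hv, huniv⟩ := hfp
    obtain ⟨G, iG, ⟨ee⟩, ⟨h⟩⟩ := h2 P iP hQP hnt
    letI := iG
    letI := iP
    set φc : L.BoundedFormula Empty k :=
      ((List.finRange n).map fun i =>
        Term.bdEqual ((lhs i).relabel Sum.inr) ((rhs i).relabel Sum.inr)).foldr (· ⊓ ·) ⊤
      with hφ
    have hG : G ⊨ φc.exs := by
      show Formula.Realize φc.exs default
      rw [BoundedFormula.realize_exs]
      refine ⟨⇑h ∘ v, ?_⟩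
      rw [hφ, BoundedFormula.realize_foldr_inf]
      intro ψ hψ
      rw [List.mem_map] at hψ
      obtain ⟨i, -, rfl⟩ := hψ
      rw [BoundedFormula.realize_bdEqual, Term.realize_relabel, Term.realize_relabel]
      have hre : (Sum.elim (default : Empty → G) (⇑h ∘ v) ∘ Sum.inr) = ⇑h ∘ v := rfl
      rw [hre, HomClass.realize_term, HomClass.realize_term, hv i]
    have hFσ : F ⊨ φc.exs := (ee.map_sentence _).2 hG
    have hFσ' : Formula.Realize φc.exs (default : Empty → F) := hFσ
    rw [BoundedFormula.realize_exs] at hFσ'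
    obtain ⟨xs, hxs⟩ := hFσ'
    rw [hφ, BoundedFormula.realize_foldr_inf] at hxs
    have hxs' : ∀ i, Term.realize xs (lhs i) = Term.realize xs (rhs i) := by
      intro i
      have hm := hxs _ (List.mem_map.2 ⟨i, List.mem_finRange i, rfl⟩)
      rw [BoundedFormula.realize_bdEqual, Term.realize_relabel, Term.realize_relabel] at hm
      exact hm
    obtain ⟨hh, -, -⟩ := huniv F iF hF.1 xs hxs'
    exact ⟨hh⟩
  -- SC implies (2)
  have part1 : IsSC Q F → (∀ (B : Type u) (iB : L.Structure B), Q B iB → Nontrivial B →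
      ∃ (G : Type u) (iG : L.Structure G),
        Nonempty (@FirstOrder.Language.ElementaryEmbedding L F G iF iG) ∧
          Nonempty (@FirstOrder.Language.Hom L B G iB iG)) := by
    intro hSC B iB hB hBnt
    letI := iB
    haveI := Classical.decEq (Σ m : ℕ, L.Functions m × (Fin m → B))
    have hY : ∀ i : Finset (Σ m : ℕ, L.Functions m × (Fin m → B)), ∃ y : B → F,
        ∀ d ∈ i, Structure.funMap d.2.1 (fun j => y (d.2.2 j))
          = y (Structure.funMap d.2.1 d.2.2) := by
      intro i
      rcases i.eq_empty_or_nonempty with rfl | ⟨d0, hd0⟩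
      · exact ⟨fun _ => g 0, fun d hd => absurd hd (Finset.notMem_empty d)⟩
      set s : Finset B := i.biUnion (fun d =>
        insert (Structure.funMap d.2.1 d.2.2) (Finset.image d.2.2 Finset.univ)) with hs
      have mem1 : ∀ d ∈ i, ∀ j, d.2.2 j ∈ s := fun d hd j =>
        Finset.mem_biUnion.2 ⟨d, hd, Finset.mem_insert.2
          (Or.inr (Finset.mem_image.2 ⟨j, Finset.mem_univ j, rfl⟩))⟩
      have mem2 : ∀ d ∈ i, Structure.funMap d.2.1 d.2.2 ∈ s := fun d hd =>
        Finset.mem_biUnion.2 ⟨d, hd, Finset.mem_insert_self _ _⟩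
      haveI : Nonempty {x // x ∈ s} := ⟨⟨_, mem2 d0 hd0⟩⟩
      set e := s.equivFin with he
      set e' : B → Fin s.card := fun b =>
        if hb : b ∈ s then e ⟨b, hb⟩ else e (Classical.arbitrary _) with he'
      set e'' : Fin s.card → B := fun j => ((e.symm j : {x // x ∈ s}) : B) with he''
      have hinv : ∀ b ∈ s, e'' (e' b) = b := by
        intro b hb
        simp only [he', he'', dif_pos hb, Equiv.symm_apply_apply]
      set ie := i.equivFin with hie
      set tl : Fin i.card → L.Term (Fin s.card) := fun c =>
        Term.func (ie.symm c).1.2.1 (fun j => Term.var (e' ((ie.symm c).1.2.2 j))) with htl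
      set tr : Fin i.card → L.Term (Fin s.card) := fun c =>
        Term.var (e' (Structure.funMap (ie.symm c).1.2.1 (ie.symm c).1.2.2)) with htr
      have hBsat : ∀ c, Term.realize e'' (tl c) = Term.realize e'' (tr c) := by
        intro c
        have hd := (ie.symm c).2
        simp only [htl, htr, Term.realize]
        rw [hinv _ (mem2 _ hd)]
        congr 1
        funext j
        rw [hinv _ (mem1 _ hd j)]
      by_cases hsat : ∃ x : Fin s.card → F, ∀ c, Term.realize x (tl c) = Term.realize x (tr c)
      · obtain ⟨x, hxc⟩ := hsat
        set Φ : {d // d ∈ i} → Prop := fun dd =>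
          Structure.funMap dd.1.2.1 (fun j => x (e' (dd.1.2.2 j)))
            = x (e' (Structure.funMap dd.1.2.1 dd.1.2.2)) with hΦ
        have key : ∀ c, Φ (ie.symm c) := by
          intro c
          have hc := hxc c
          simp only [htl, htr, Term.realize] at hc
          exact hc
        have key2 : ∀ dd, Φ dd := by
          intro dd
          rw [← Equiv.symm_apply_apply ie dd]
          exact key (ie dd)
        refine ⟨fun b => x (e' b), ?_⟩
        intro d hd
        exact key2 ⟨d, hd⟩
      · exfalso
        obtain ⟨u, w, huw⟩ := hBnt
        exact huw (ASCAux.sc_key Q F hSC tl tr hsat B iB hB e'' hBsat u w)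
    choose Y hYp using hY
    set U := Ultrafilter.of
      (Filter.atTop : Filter (Finset (Σ m : ℕ, L.Functions m × (Fin m → B)))) with hU
    have hmem : ∀ d : (Σ m : ℕ, L.Functions m × (Fin m → B)),
        {i : Finset (Σ m : ℕ, L.Functions m × (Fin m → B)) | d ∈ i}
          ∈ (U : Filter (Finset (Σ m : ℕ, L.Functions m × (Fin m → B)))) := by
      intro d
      refine Filter.le_def.1 (Ultrafilter.of_le _) _ ?_
      refine Filter.mem_of_superset (Filter.mem_atTop {d}) ?_
      intro i hi
      exact Finset.singleton_subset_iff.1 hi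
    refine ⟨(U : Filter (Finset (Σ m : ℕ, L.Functions m × (Fin m → B)))).Product (fun _ => F),
      inferInstance, ⟨ASCAux.diagEE U F⟩, ⟨ASCAux.ultraHom U F B iB Y ?_⟩⟩
    intro m f xs
    refine Filter.mem_of_superset (hmem ⟨m, f, xs⟩) ?_
    intro i hi
    exact (hYp i ⟨m, f, xs⟩ hi).symm
  exact ⟨⟨part1, fun hc => part3 (part2 hc)⟩, ⟨fun hsc => part2 (part1 hsc), part3⟩⟩
end

section
/- If Q is an almost structurally complete quasivariety and some elementary extension of the free algebra F of denumerable rank for Q contains an idempotent element (a one-element subalgebra), then Q is structurally complete. -/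
open FirstOrder Language

universe u

variable {L : FirstOrder.Language.{u, u}}

noncomputable def premiseSentence (q : QuasiId L) : L.Sentence :=
  (BoundedFormula.iInf
    (fun i : Fin q.n =>
      Term.bdEqual ((q.lhs i).relabel Sum.inr) ((q.rhs i).relabel Sum.inr))).exs

theorem premiseSentence_realize (q : QuasiId L) (M : Type u) [L.Structure M] :
    M ⊨ premiseSentence q ↔ q.PremiseSat M := by
  simp only [premiseSentence, Sentence.Realize,
    BoundedFormula.realize_exs, BoundedFormula.realize_iInf, Finset.mem_univ, true_implies,
    BoundedFormula.realize_bdEqual, Term.realize_relabel]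
  unfold QuasiId.PremiseSat
  constructor
  · rintro ⟨xs, h⟩
    exact ⟨xs, fun i => by simpa using h i⟩
  · rintro ⟨xs, h⟩
    exact ⟨xs, fun i => by simpa using h i⟩

theorem term_realize_idem {M : Type u} [L.Structure M] {e : M}
    (he : IsIdemElem (L := L) M e) {β : Type*} (t : L.Term β) :
    t.realize (fun _ => e) = e := by
  induction t with
  | var => rfl
  | func f ts ih =>
      show Structure.funMap f _ = e
      have : (fun i => Term.realize (fun _ => e) (ts i)) = fun _ => e := funext fun i => ih i
      rw [this, he]

theorem stmt_2 {L : FirstOrder.Language.{u, u}} [L.IsAlgebraic]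
    (Q : ∀ M : Type u, L.Structure M → Prop) (hQ : IsQuasivariety Q)
    (F : Type u) [iF : L.Structure F] (g : ℕ → F) (hF : IsFreeAlgOn Q F g)
    (hASC : IsASC Q F) (hidem : HasIdemElemExtension (L := L) F) :
    IsSC Q F := by
  intro q hq M iM hM
  rcases hidem with ⟨G, iG, ⟨f⟩, e, he⟩
  have hsat : q.PremiseSat F := by
    rw [← premiseSentence_realize]
    rw [f.map_sentence]
    rw [premiseSentence_realize]
    exact ⟨fun _ => e, fun i => by
      rw [term_realize_idem he, term_realize_idem he]⟩
  exact hASC q hq hsat M iM hM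
end

section
/- Let Q be a structurally complete quasivariety such that no elementary extension of the free algebra F of denumerable rank for Q has an idempotent element. Then for every Q-simple algebra S and every nontrivial algebra A in Q, S embeds into some elementary extension of A. -/
open FirstOrder Language

universe u

variable {L : FirstOrder.Language.{u, u}}

section Aux

open Filter

variable {L : FirstOrder.Language.{u, u}}

/-- Realization of a term only depends on the occurring variables. -/
theorem term_realize_agree {α M : Type u} [DecidableEq α] [L.Structure M]
    (t : L.Term α) (v w : α → M) (h : ∀ a ∈ t.varFinset, v a = w a) :
    t.realize v = t.realize w := by
  induction t with
  | var a => exact h a (by simp [Term.varFinset])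
  | func f ts ih =>
    simp only [Term.realize]
    congr 1
    funext i
    exact ih i fun a ha => h a (by
      simp only [Term.varFinset, Finset.mem_biUnion]
      exact ⟨i, Finset.mem_univ i, ha⟩)

/-- Index type: lists of objects satisfying a predicate, preordered by membership. -/
def ListIdx (X : Type u) (Pr : X → Prop) : Type u := {l : List X // ∀ x ∈ l, Pr x}

instance ListIdx.instPreorder (X : Type u) (Pr : X → Prop) : Preorder (ListIdx X Pr) where
  le a b := ∀ x ∈ a.val, x ∈ b.val
  le_refl a := fun x hx => hx
  le_trans a b c hab hbc := fun x hx => hbc x (hab x hx)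

instance ListIdx.instNonempty (X : Type u) (Pr : X → Prop) : Nonempty (ListIdx X Pr) :=
  ⟨⟨[], by simp⟩⟩

instance ListIdx.instIsDirected (X : Type u) (Pr : X → Prop) :
    IsDirected (ListIdx X Pr) (· ≤ ·) :=
  ⟨fun a b =>
    ⟨⟨a.val ++ b.val, by
        intro x hx
        rcases List.mem_append.1 hx with h | h
        exacts [a.2 x h, b.2 x h]⟩,
      fun x hx => List.mem_append.2 (Or.inl hx), fun x hx => List.mem_append.2 (Or.inr hx)⟩⟩

instance ListIdx.atTop_neBot (X : Type u) (Pr : X → Prop) :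
    (atTop : Filter (ListIdx X Pr)).NeBot :=
  Filter.atTop_neBot_iff.2 ⟨inferInstance, inferInstance⟩

/-- An ultrafilter on `ListIdx` refining the order filter. -/
noncomputable def listUlt (X : Type u) (Pr : X → Prop) : Ultrafilter (ListIdx X Pr) :=
  Ultrafilter.of atTop

theorem mem_listUlt (X : Type u) (Pr : X → Prop) {x : X} (hx : Pr x) :
    {l : ListIdx X Pr | x ∈ l.val} ∈ listUlt X Pr := by
  refine Ultrafilter.of_le atTop (mem_of_superset
    (Filter.Ici_mem_atTop (α := ListIdx X Pr) ⟨[x], by simpa using hx⟩) ?_)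
  intro l hl
  exact hl x (by simp)

end Aux

section Aux2

open Filter

variable {L : FirstOrder.Language.{u, u}}

theorem quasiId_holds_ultraproduct {ι : Type u} (u : Ultrafilter ι) (M : ι → Type u)
    [iM : ∀ i, L.Structure (M i)] (q : QuasiId L) (h : ∀ i, q.Holds (M i)) :
    q.Holds ((u : Filter ι).Product M) := by
  intro x hx
  have hrep : ∀ j, ∃ y : ∀ i, M i, (↑y : (u : Filter ι).Product M) = x j :=
    fun j => Quotient.exists_rep (x j)
  choose x' hx' using hrep
  have key : ∀ i : Fin q.n, ∀ᶠ a in (u : Filter ι),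
      (q.lhs i).realize (fun j => x' j a) = (q.rhs i).realize (fun j => x' j a) := by
    intro i
    have hxi := hx i
    erw [← funext hx', Ultraproduct.term_realize_cast, Ultraproduct.term_realize_cast] at hxi
    exact Quotient.eq''.1 hxi
  have big : ∀ᶠ a in (u : Filter ι), ∀ i : Fin q.n,
      (q.lhs i).realize (fun j => x' j a) = (q.rhs i).realize (fun j => x' j a) :=
    Filter.eventually_all.2 key
  erw [← funext hx', Ultraproduct.term_realize_cast, Ultraproduct.term_realize_cast]
  exact Quotient.eq''.2 (big.mono fun a ha => h a (fun j => x' j a) ha)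

/-- The diagonal elementary embedding into an ultrapower. -/
noncomputable def diagElemEmb {ι : Type u} (u : Ultrafilter ι) (A : Type u)
    [iA : L.Structure A] [Nonempty A] :
    @FirstOrder.Language.ElementaryEmbedding L A ((u : Filter ι).Product (fun _ => A)) iA
      inferInstance where
  toFun a := (↑(fun _ : ι => a) : (u : Filter ι).Product (fun _ => A))
  map_formula' := by
    intro n φ x
    have : ((fun a => (↑(fun _ : ι => a) : (u : Filter ι).Product (fun _ => A))) ∘ x)
        = fun j => (↑((fun j (_ : ι) => x j) j) : (u : Filter ι).Product (fun _ => A)) := rfl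
    erw [this, Ultraproduct.realize_formula_cast]
    simp

theorem quasiId_holds_embedding {M N : Type u} [iM : L.Structure M] [iN : L.Structure N]
    (e : M ↪[L] N) (q : QuasiId L) (h : q.Holds N) : q.Holds M := by
  intro x hx
  apply e.injective
  have ht : ∀ t : L.Term (Fin q.k), t.realize (e ∘ x) = e (t.realize x) := fun t =>
    HomClass.realize_term e
  rw [← ht, ← ht]
  exact h (e ∘ x) fun i => by rw [ht, ht, hx i]

theorem Q_substructure {Q : ∀ M : Type u, L.Structure M → Prop} (hQ : IsQuasivariety Q)
    {N : Type u} [iN : L.Structure N] (hN : Q N iN) (T : L.Substructure N) :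
    Q T inferInstance := by
  obtain ⟨Ax, hAx⟩ := hQ
  rw [hAx]
  intro q hq
  exact quasiId_holds_embedding T.subtype q ((hAx N iN).1 hN q hq)

/-- The free algebra is generated by its free generators. -/
theorem free_gen {Q : ∀ M : Type u, L.Structure M → Prop} (hQ : IsQuasivariety Q)
    {F : Type u} [iF : L.Structure F] {g : ℕ → F} (hF : IsFreeAlgOn Q F g) :
    ∀ x : F, ∃ t : L.Term ℕ, t.realize g = x := by
  classical
  obtain ⟨hQF, hginj, hfree⟩ := hF
  set C := Substructure.closure L (Set.range g) with hC
  have hQC : Q C inferInstance := Q_substructure hQ hQF C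
  obtain ⟨h, hh, -⟩ := hfree C inferInstance hQC
    (fun m => ⟨g m, Substructure.subset_closure (Set.mem_range_self m)⟩)
  obtain ⟨h1, -, huniq1⟩ := hfree F iF hQF g
  set h2 : @Language.Hom L F F iF iF := (C.subtype.toHom).comp h with hh2
  have e1 : h2 = h1 := huniq1 h2 (fun m => congrArg Subtype.val (hh m))
  have e2 : Language.Hom.id L F = h1 := huniq1 _ (fun m => rfl)
  intro x
  have hxC : x ∈ C := by
    have hx2 : h2.toFun x = x := by rw [e1, ← e2]; rfl
    have : h2.toFun x = ((h.toFun x : C) : F) := rfl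
    rw [this] at hx2
    rw [← hx2]
    exact (h.toFun x).2
  obtain ⟨t, ht⟩ := Substructure.mem_closure_iff_exists_term.1 hxC
  refine ⟨t.relabel (fun y => y.2.choose), ?_⟩
  rw [Term.realize_relabel, ← ht]
  congr 1
  funext y
  exact y.2.choose_spec

/-- Equations holding at the free generators hold under every valuation in every member of Q. -/
theorem free_transfer {Q : ∀ M : Type u, L.Structure M → Prop}
    {F : Type u} [iF : L.Structure F] {g : ℕ → F} (hF : IsFreeAlgOn Q F g)
    {t₁ t₂ : L.Term ℕ} (h : t₁.realize g = t₂.realize g)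
    (B : Type u) (iB : L.Structure B) (hB : Q B iB) (v : ℕ → B) :
    t₁.realize v = t₂.realize v := by
  obtain ⟨hm, hmg, -⟩ := hF.2.2 B iB hB v
  have e : ∀ t : L.Term ℕ, t.realize v = hm.toFun (t.realize g) := by
    intro t
    have h1 : t.realize (hm ∘ g) = hm (t.realize g) := HomClass.realize_term hm
    have h2 : (hm ∘ g : ℕ → B) = v := funext fun m => hmg m
    rw [← h2, h1]
    rfl
  rw [e, e, h]

end Aux2

section Aux3

open Filter

variable {L : FirstOrder.Language.{u, u}}

/-- In `A` there is a finite set of function symbols admitting no common diagonal fixed point. -/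
theorem exists_bad_funs {Q : ∀ M : Type u, L.Structure M → Prop}
    {F : Type u} [iF : L.Structure F] {g : ℕ → F} (hF : IsFreeAlgOn Q F g)
    (hSC : IsSC Q F)
    (hno : ∀ (G : Type u) (iG : L.Structure G),
      Nonempty (@FirstOrder.Language.ElementaryEmbedding L F G iF iG) →
        ∀ e : G, ¬ @IsIdemElem L G iG e)
    (A : Type u) (iA : L.Structure A) (hQA : Q A iA) (hA : Nontrivial A) :
    ∃ fs : List (Σ n : ℕ, L.Functions n),
      ∀ e : A, ¬ ∀ p ∈ fs, @Structure.funMap L A iA p.1 p.2 (fun _ => e) = e := by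
  by_contra hcon
  push_neg at hcon
  -- for every list of function symbols there is a common diagonal fixed point in `F`
  have hFfix : ∀ i : ListIdx (Σ n : ℕ, L.Functions n) (fun _ => True),
      ∃ c : F, ∀ p ∈ i.val, Structure.funMap p.2 (fun _ => c) = c := by
    intro i
    set q : QuasiId L :=
      ⟨3, i.val.length, fun j => Term.func (i.val.get j).2 (fun _ => Term.var 0),
        fun _ => Term.var 0, Term.var 1, Term.var 2⟩ with hq
    have hqA : ¬ q.Holds A := by
      intro hH
      obtain ⟨e, he⟩ := hcon i.val
      obtain ⟨a, b, hab⟩ := hA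
      refine hab (hH ![e, a, b] ?_)
      intro j
      simp only [q, Term.realize]
      exact he (i.val.get j) (i.val.get_mem _)
    have hqF : ¬ q.Holds F := fun hH => hqA (hSC q hH A iA hQA)
    rw [QuasiId.Holds] at hqF
    push_neg at hqF
    obtain ⟨y, hy, -⟩ := hqF
    refine ⟨y 0, ?_⟩
    intro p hp
    obtain ⟨j, hj⟩ := List.mem_iff_get.1 hp
    have := hy j
    simp only [q, Term.realize] at this
    rw [hj] at this
    exact this
  choose c hc using hFfix
  set G := ((↑(listUlt (Σ n : ℕ, L.Functions n) (fun _ => True)) :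
    Filter (ListIdx (Σ n : ℕ, L.Functions n) (fun _ => True))).Product (fun _ => F)) with hG
  haveI : Nonempty F := ⟨g 0⟩
  have hidem : @IsIdemElem L G inferInstance (↑c : G) := by
    intro m f
    have h2 : Structure.funMap f (fun _ : Fin m => (↑c : G)) =
        (↑(fun a => Structure.funMap f (fun _ : Fin m => c a)) : G) :=
      Ultraproduct.funMap_cast f (fun _ : Fin m => c)
    erw [h2]
    refine Quotient.eq''.2 ?_
    refine Filter.Eventually.mono (mem_listUlt _ _ (x := ⟨m, f⟩) trivial) ?_
    intro i hi
    exact hc i ⟨m, f⟩ hi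
  exact hno G inferInstance ⟨diagElemEmb _ F⟩ _ hidem

/-- Bridge lemma: from a `Q`-simple algebra, collapsing one pair of distinct elements
collapses any other pair, witnessed by finitely many equations. -/
theorem bridge [L.IsAlgebraic] {Q : ∀ M : Type u, L.Structure M → Prop}
    (hQ : IsQuasivariety Q) {S : Type u} [iS : L.Structure S]
    (hS : IsQSimple Q S) {a b : S} (hab : a ≠ b) (c d : S) :
    ∃ l : List (L.Term S × L.Term S),
      (∀ p ∈ l, p.1.realize (fun s : S => s) = p.2.realize (fun s : S => s)) ∧
      ∀ (B : Type u) (iB : L.Structure B), Q B iB → ∀ x : S → B,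
        (∀ p ∈ l, p.1.realize x = p.2.realize x) → x a = x b → x c = x d := by
  by_contra hcon
  push_neg at hcon
  have hcon' : ∀ i : ListIdx (L.Term S × L.Term S)
      (fun p => p.1.realize (fun s : S => s) = p.2.realize (fun s : S => s)),
      ∃ (B : Type u) (iB : L.Structure B), Q B iB ∧ ∃ x : S → B,
        (∀ p ∈ i.val, p.1.realize x = p.2.realize x) ∧ x a = x b ∧ x c ≠ x d := by
    intro i
    obtain ⟨B, iB, hB, x, h1, h2, h3⟩ := hcon i.val i.2
    exact ⟨B, iB, hB, x, h1, h2, h3⟩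
  choose B iB hB x heq habx hcdx using hcon'
  letI : ∀ i, L.Structure (B i) := iB
  set U := listUlt (L.Term S × L.Term S)
    (fun p => p.1.realize (fun s : S => s) = p.2.realize (fun s : S => s)) with hU
  set Bu := ((↑U : Filter (ListIdx (L.Term S × L.Term S)
    (fun p => p.1.realize (fun s : S => s) = p.2.realize (fun s : S => s)))).Product B) with hBu
  have hQBu : Q Bu inferInstance := by
    obtain ⟨Ax, hAx⟩ := hQ
    refine (hAx _ _).2 fun q hq => ?_
    exact quasiId_holds_ultraproduct U B q (fun i => (hAx _ _).1 (hB i) q hq)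
  set hom : @Language.Hom L S Bu iS inferInstance :=
    { toFun := fun s => (↑(fun i => x i s) : Bu)
      map_fun' := by
        intro n f ys
        have hp : ((Term.func f (fun j => Term.var (ys j)) : L.Term S),
            (Term.var (Structure.funMap f ys) : L.Term S)).1.realize (fun s : S => s)
            = ((Term.func f (fun j => Term.var (ys j)) : L.Term S),
            (Term.var (Structure.funMap f ys) : L.Term S)).2.realize (fun s : S => s) := rfl
        have h1 : ((fun s => (↑(fun i => x i s) : Bu)) ∘ ys)
            = fun j => (↑((fun j i => x i (ys j)) j) : Bu) := rfl
        erw [h1, Ultraproduct.funMap_cast]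
        refine (Quotient.eq''.2 ?_).symm
        refine Filter.Eventually.mono (mem_listUlt _ _ hp) ?_
        intro i hi
        have := heq i _ hi
        simp only [Term.realize] at this
        exact this
      map_rel' := fun {n} r _ => isEmptyElim r } with hhom
  have hQC : IsQCong Q S (fun u v => hom.toFun u = hom.toFun v) :=
    ⟨Bu, inferInstance, hQBu, hom, fun _ _ => Iff.rfl⟩
  rcases hS.2.2 _ hQC with heqr | htot
  · refine hab ((heqr a b).1 ?_)
    exact Quotient.eq''.2 (Filter.Eventually.of_forall fun i => habx i)
  · have : hom.toFun c = hom.toFun d := htot c d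
    obtain ⟨i, hi⟩ := (Quotient.eq''.1 this).exists
    exact hcdx i hi

end Aux3

section Aux4

open Filter

variable {L : FirstOrder.Language.{u, u}}

theorem acc_subset_foldr {S : Type u} [DecidableEq S] (LL : List (L.Term S × L.Term S))
    (acc : Finset S) :
    acc ⊆ LL.foldr (fun p t => p.1.varFinset ∪ p.2.varFinset ∪ t) acc := by
  induction LL with
  | nil => exact fun x hx => hx
  | cons p LL ih => exact fun x hx => Finset.mem_union_right _ (ih hx)

theorem mem_foldr_varFinset {S : Type u} [DecidableEq S] {LL : List (L.Term S × L.Term S)}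
    {acc : Finset S} {p : L.Term S × L.Term S} (hp : p ∈ LL) :
    p.1.varFinset ∪ p.2.varFinset ⊆
      LL.foldr (fun p t => p.1.varFinset ∪ p.2.varFinset ∪ t) acc := by
  induction LL with
  | nil => cases hp
  | cons q LL ih =>
    rcases List.mem_cons.1 hp with rfl | hp
    · exact fun x hx => Finset.mem_union_left _ hx
    · exact fun x hx => Finset.mem_union_right _ (ih hp hx)

theorem crux [L.IsAlgebraic] {Q : ∀ M : Type u, L.Structure M → Prop} (hQ : IsQuasivariety Q)
    {F : Type u} [iF : L.Structure F] {g : ℕ → F} (hF : IsFreeAlgOn Q F g) (hSC : IsSC Q F)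
    {S : Type u} [iS : L.Structure S] (hS : IsQSimple Q S)
    {A : Type u} [iA : L.Structure A] (hQA : Q A iA) (hA : Nontrivial A)
    (fs : List (Σ n : ℕ, L.Functions n))
    (hfs : ∀ e : A, ¬ ∀ p ∈ fs, Structure.funMap p.2 (fun _ => e) = e)
    (l : List (L.Term S × L.Term S))
    (hl : ∀ p ∈ l, p.1.realize (fun s : S => s) = p.2.realize (fun s : S => s))
    (ds : List (S × S)) (hds : ∀ d ∈ ds, d.1 ≠ d.2) :
    ∃ x : S → A, (∀ p ∈ l, p.1.realize x = p.2.realize x) ∧ ∀ d ∈ ds, x d.1 ≠ x d.2 := by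
  classical
  obtain ⟨w, w', hww⟩ := hS.1
  -- bridges for the inequality pairs
  have hdbex : ∀ d : {d // d ∈ ds}, ∃ ld : List (L.Term S × L.Term S),
      (∀ p ∈ ld, p.1.realize (fun s : S => s) = p.2.realize (fun s : S => s)) ∧
      ∀ (B : Type u) (iB : L.Structure B), Q B iB → ∀ x : S → B,
        (∀ p ∈ ld, p.1.realize x = p.2.realize x) → x d.val.1 = x d.val.2 → x w = x w' :=
    fun d => bridge hQ hS (hds d.val d.2) w w'
  choose dbr hdb1 hdb2 using hdbex
  -- bridges for the function symbols
  have hfbex : ∀ p : {p // p ∈ fs}, ∃ lp : List (L.Term S × L.Term S),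
      (∀ q ∈ lp, q.1.realize (fun s : S => s) = q.2.realize (fun s : S => s)) ∧
      ∀ (B : Type u) (iB : L.Structure B), Q B iB → ∀ x : S → B,
        (∀ q ∈ lp, q.1.realize x = q.2.realize x) → x w = x w' →
          x w = x (Structure.funMap p.val.2 (fun _ => w)) :=
    fun p => bridge hQ hS hww w (Structure.funMap p.val.2 (fun _ => w))
  choose fbr hfb1 hfb2 using hfbex
  set feqs : List (L.Term S × L.Term S) := fs.attach.map
    (fun p => ((Term.func p.val.2 (fun _ => Term.var w) : L.Term S),
      (Term.var (Structure.funMap p.val.2 (fun _ => w)) : L.Term S))) with hfeqs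
  set Lstar : List (L.Term S × L.Term S) :=
    l ++ (ds.attach.flatMap dbr) ++ (fs.attach.flatMap fbr) ++ feqs with hLstar
  -- memberships
  have m1 : ∀ p ∈ l, p ∈ Lstar := by
    intro p hp
    simp only [hLstar, List.mem_append]
    exact Or.inl (Or.inl (Or.inl hp))
  have m2 : ∀ (d : {d // d ∈ ds}) (p : L.Term S × L.Term S), p ∈ dbr d → p ∈ Lstar := by
    intro d p hp
    simp only [hLstar, List.mem_append]
    exact Or.inl (Or.inl (Or.inr (List.mem_flatMap.2 ⟨d, List.mem_attach _ _, hp⟩)))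
  have m3 : ∀ (p : {p // p ∈ fs}) (q : L.Term S × L.Term S), q ∈ fbr p → q ∈ Lstar := by
    intro p q hq
    simp only [hLstar, List.mem_append]
    exact Or.inl (Or.inr (List.mem_flatMap.2 ⟨p, List.mem_attach _ _, hq⟩))
  have m4 : ∀ p : {p // p ∈ fs},
      ((Term.func p.val.2 (fun _ => Term.var w) : L.Term S),
        (Term.var (Structure.funMap p.val.2 (fun _ => w)) : L.Term S)) ∈ Lstar := by
    intro p
    simp only [hLstar, List.mem_append]
    exact Or.inr (List.mem_map_of_mem (List.mem_attach _ _))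
  -- all equations in Lstar are true in S under the identity valuation
  have hLtrue : ∀ p ∈ Lstar, p.1.realize (fun s : S => s) = p.2.realize (fun s : S => s) := by
    intro p hp
    simp only [hLstar, List.mem_append] at hp
    rcases hp with ((hp | hp) | hp) | hp
    · exact hl p hp
    · obtain ⟨d, -, hd⟩ := List.mem_flatMap.1 hp
      exact hdb1 d p hd
    · obtain ⟨q, -, hq⟩ := List.mem_flatMap.1 hp
      exact hfb1 q p hq
    · obtain ⟨q, -, rfl⟩ := List.mem_map.1 hp
      rfl
  -- finitization
  set R : Finset S := Lstar.foldr (fun p t => p.1.varFinset ∪ p.2.varFinset ∪ t) {w, w'}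
    with hR
  set lst : List S := R.toList with hlst
  have hwR : w ∈ lst := Finset.mem_toList.2 (acc_subset_foldr _ _ (Finset.mem_insert_self _ _))
  have hw'R : w' ∈ lst := Finset.mem_toList.2 (acc_subset_foldr _ _
    (Finset.mem_insert_of_mem (Finset.mem_singleton_self _)))
  have hk : 0 < lst.length := List.length_pos_iff.2 (List.ne_nil_of_mem hwR)
  set c : Fin lst.length → S := lst.get with hc
  set r : S → Fin lst.length := fun s =>
    if h : s ∈ lst then ⟨List.idxOf s lst, List.idxOf_lt_length_iff.2 h⟩ else ⟨0, hk⟩ with hr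
  have hcr : ∀ s ∈ lst, c (r s) = s := by
    intro s hs
    simp only [hr, dif_pos hs, hc]
    exact List.idxOf_get _
  have hvars : ∀ p ∈ Lstar, ∀ a ∈ p.1.varFinset, a ∈ lst := by
    intro p hp a ha
    exact Finset.mem_toList.2 (mem_foldr_varFinset hp (Finset.mem_union_left _ ha))
  have hvars2 : ∀ p ∈ Lstar, ∀ a ∈ p.2.varFinset, a ∈ lst := by
    intro p hp a ha
    exact Finset.mem_toList.2 (mem_foldr_varFinset hp (Finset.mem_union_right _ ha))
  -- the quasi-identity
  set qq : QuasiId L := ⟨lst.length, Lstar.length,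
    fun i => (Lstar.get i).1.relabel r, fun i => (Lstar.get i).2.relabel r,
    Term.var (r w), Term.var (r w')⟩ with hqq
  have hqS : ¬ qq.Holds S := by
    intro hH
    have hprem : ∀ i, (qq.lhs i).realize c = (qq.rhs i).realize c := by
      intro i
      simp only [qq, Term.realize_relabel]
      have h1 : ((Lstar.get i).1).realize (c ∘ r) = ((Lstar.get i).1).realize (fun s => s) :=
        term_realize_agree _ _ _ (fun a ha => hcr a (hvars _ (Lstar.get_mem _) a ha))
      have h2 : ((Lstar.get i).2).realize (c ∘ r) = ((Lstar.get i).2).realize (fun s => s) :=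
        term_realize_agree _ _ _ (fun a ha => hcr a (hvars2 _ (Lstar.get_mem _) a ha))
      rw [h1, h2]
      exact hLtrue _ (Lstar.get_mem _)
    have := hH c hprem
    simp only [qq, Term.realize] at this
    rw [hcr w hwR, hcr w' hw'R] at this
    exact hww this
  have hqF : ¬ qq.Holds F := fun hH => hqS (hSC qq hH S iS hS.2.1)
  rw [QuasiId.Holds] at hqF
  push_neg at hqF
  obtain ⟨y, hyprem, hyneq⟩ := hqF
  -- write the witnesses as terms in the generators
  choose u hu using fun i => free_gen hQ hF (y i)
  have hsubst : ∀ (τ : L.Term (Fin lst.length)), (τ.subst (fun j => u j)).realize g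
      = τ.realize y := by
    intro τ
    rw [Term.realize_subst]
    congr 1
    funext j
    exact hu j
  have hvalid : ∀ (τ1 τ2 : L.Term (Fin lst.length)), τ1.realize y = τ2.realize y →
      ∀ v : ℕ → A, τ1.realize (fun j => (u j).realize v) =
        τ2.realize (fun j => (u j).realize v) := by
    intro τ1 τ2 hyeq v
    have h1 : (τ1.subst (fun j => u j)).realize g = (τ2.subst (fun j => u j)).realize g := by
      rw [hsubst, hsubst, hyeq]
    have h2 := free_transfer hF h1 A iA hQA v
    rw [Term.realize_subst, Term.realize_subst] at h2
    exact h2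
  have hALL : ∀ (v : ℕ → A) (pp : L.Term S × L.Term S), pp ∈ Lstar →
      pp.1.realize ((fun j => (u j).realize v) ∘ r) =
        pp.2.realize ((fun j => (u j).realize v) ∘ r) := by
    intro v pp hpp
    obtain ⟨i, hi⟩ := List.mem_iff_get.1 hpp
    have h0 := hvalid _ _ (hyprem i) v
    simp only [qq] at h0
    rw [Term.realize_relabel, Term.realize_relabel] at h0
    rw [← hi]
    exact h0
  by_cases hcase : ∀ v : ℕ → A, (u (r w)).realize v = (u (r w')).realize v
  · -- impossible: produces a common diagonal fixed point in A
    exfalso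
    obtain ⟨a0, -, -⟩ := hA.exists_pair_ne
    set v0 : ℕ → A := fun _ => a0 with hv0
    set x : S → A := (fun j => (u j).realize v0) ∘ r with hx
    have hxww : x w = x w' := hcase v0
    refine hfs (x w) ?_
    intro p hp
    have hb := hfb2 ⟨p, hp⟩ A iA hQA x (fun q hq => hALL v0 q (m3 ⟨p, hp⟩ q hq)) hxww
    have hfe := hALL v0 _ (m4 ⟨p, hp⟩)
    simp only [Term.realize] at hfe
    exact hfe.trans hb.symm
  · push_neg at hcase
    obtain ⟨v, hv⟩ := hcase
    set x : S → A := (fun j => (u j).realize v) ∘ r with hx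
    refine ⟨x, ?_, ?_⟩
    · intro p hp
      exact hALL v p (m1 p hp)
    · intro d hd heqd
      exact hv (hdb2 ⟨d, hd⟩ A iA hQA x (fun q hq => hALL v q (m2 ⟨d, hd⟩ q hq)) heqd)

end Aux4

theorem stmt_3 {L : FirstOrder.Language.{u, u}} [L.IsAlgebraic]
    (Q : ∀ M : Type u, L.Structure M → Prop) (hQ : IsQuasivariety Q)
    (F : Type u) [iF : L.Structure F] (g : ℕ → F) (hF : IsFreeAlgOn Q F g)
    (hSC : IsSC Q F)
    (hno : ∀ (G : Type u) (iG : L.Structure G),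
      Nonempty (@FirstOrder.Language.ElementaryEmbedding L F G iF iG) →
        ∀ e : G, ¬ @IsIdemElem L G iG e)
    (S : Type u) [iS : L.Structure S] (hS : IsQSimple Q S)
    (A : Type u) [iA : L.Structure A] (hQA : Q A iA) (hA : Nontrivial A) :
    ∃ (B : Type u) (iB : L.Structure B),
      Nonempty (@FirstOrder.Language.ElementaryEmbedding L A B iA iB) ∧
        Nonempty (@FirstOrder.Language.Embedding L S B iS iB) := by
  classical
  haveI : Nonempty A := ⟨hA.exists_pair_ne.choose⟩
  obtain ⟨fs, hfs⟩ := exists_bad_funs hF hSC hno A iA hQA hA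
  set OK : ((L.Term S × L.Term S) ⊕ (S × S)) → Prop := Sum.elim
    (fun p => p.1.realize (fun s : S => s) = p.2.realize (fun s : S => s))
    (fun d => d.1 ≠ d.2) with hOK
  have hwit : ∀ j : ListIdx ((L.Term S × L.Term S) ⊕ (S × S)) OK, ∃ x : S → A,
      (∀ p : L.Term S × L.Term S, Sum.inl p ∈ j.val → p.1.realize x = p.2.realize x) ∧
      (∀ d : S × S, Sum.inr d ∈ j.val → x d.1 ≠ x d.2) := by
    intro j
    set el : List (L.Term S × L.Term S) := j.val.filterMap
      (fun z => match z with | Sum.inl p => some p | Sum.inr _ => none) with hel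
    set dl : List (S × S) := j.val.filterMap
      (fun z => match z with | Sum.inl _ => none | Sum.inr d => some d) with hdl
    have hel_mem : ∀ p, p ∈ el ↔ Sum.inl p ∈ j.val := by
      intro p
      constructor
      · intro hp
        obtain ⟨z, hz, hz2⟩ := List.mem_filterMap.1 hp
        cases z with
        | inl q => cases hz2; exact hz
        | inr d => simp at hz2
      · intro hp
        exact List.mem_filterMap.2 ⟨Sum.inl p, hp, rfl⟩
    have hdl_mem : ∀ d, d ∈ dl ↔ Sum.inr d ∈ j.val := by
      intro d
      constructor
      · intro hd
        obtain ⟨z, hz, hz2⟩ := List.mem_filterMap.1 hd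
        cases z with
        | inl q => simp at hz2
        | inr d' => cases hz2; exact hz
      · intro hd
        exact List.mem_filterMap.2 ⟨Sum.inr d, hd, rfl⟩
    obtain ⟨x, h1, h2⟩ := crux hQ hF hSC hS hQA hA fs hfs el
      (fun p hp => j.2 _ ((hel_mem p).1 hp)) dl
      (fun d hd => j.2 _ ((hdl_mem d).1 hd))
    exact ⟨x, fun p hp => h1 p ((hel_mem p).2 hp), fun d hd => h2 d ((hdl_mem d).2 hd)⟩
  choose xx hx1 hx2 using hwit
  set U := listUlt ((L.Term S × L.Term S) ⊕ (S × S)) OK with hU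
  set B := ((↑U : Filter (ListIdx ((L.Term S × L.Term S) ⊕ (S × S)) OK)).Product
    (fun _ => A)) with hB
  refine ⟨B, inferInstance, ⟨diagElemEmb U A⟩, ⟨?_⟩⟩
  set hom : @Language.Hom L S B iS inferInstance :=
    { toFun := fun s => (↑(fun j => xx j s) : B)
      map_fun' := by
        intro n f ys
        have hok : OK (Sum.inl ((Term.func f (fun j => Term.var (ys j)) : L.Term S),
            (Term.var (Structure.funMap f ys) : L.Term S))) := rfl
        have h1 : ((fun s => (↑(fun j => xx j s) : B)) ∘ ys)
            = fun i => (↑((fun i j => xx j (ys i)) i) : B) := rfl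
        erw [h1, Ultraproduct.funMap_cast]
        refine (Quotient.eq''.2 ?_).symm
        refine Filter.Eventually.mono (mem_listUlt _ _ hok) ?_
        intro j hj
        have := hx1 j _ hj
        simp only [Term.realize] at this
        exact this
      map_rel' := fun {n} r _ => isEmptyElim r } with hhom
  have hinj : Function.Injective hom.toFun := by
    intro s s' hss
    by_contra hne
    have hok : OK (Sum.inr (s, s')) := hne
    have hev : ∀ᶠ j in (↑U : Filter (ListIdx ((L.Term S × L.Term S) ⊕ (S × S)) OK)),
        xx j s = xx j s' := Quotient.eq''.1 hss
    have hme : ∀ᶠ j in (↑U : Filter (ListIdx ((L.Term S × L.Term S) ⊕ (S × S)) OK)),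
        Sum.inr (s, s') ∈ j.val := mem_listUlt _ _ hok
    obtain ⟨j, hj1, hj2⟩ := (hev.and hme).exists
    exact hx2 j (s, s') hj2 hj1
  exact Language.Embedding.ofInjective hinj
end

section
/- Let Q be an almost structurally complete semisimple quasivariety. Then Q is structurally complete if and only if either some elementary extension of the free algebra F of denumerable rank for Q has an idempotent element, or Q is a minimal quasivariety. -/
open FirstOrder Language

universe u

variable {L : FirstOrder.Language.{u, u}}

set_option linter.unusedSectionVars false
set_option maxHeartbeats 1000000

namespace SCAux
open Filter

section Hom
variable [L.IsAlgebraic]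

def homMk {M N : Type u} [L.Structure M] [L.Structure N] (f : M → N)
    (hf : ∀ {n : ℕ} (fu : L.Functions n) (x : Fin n → M),
      f (Structure.funMap fu x) = Structure.funMap fu (f ∘ x)) : L.Hom M N where
  toFun := f
  map_fun' := hf
  map_rel' := fun {n} r _ => ((‹L.IsAlgebraic› n).elim r)

theorem hom_realize_term {M N : Type u} [L.Structure M] [L.Structure N] (h : L.Hom M N)
    {k : ℕ} (t : L.Term (Fin k)) (x : Fin k → M) :
    h.toFun (t.realize x) = t.realize (h.toFun ∘ x) := by
  induction t with
  | var => rfl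
  | func fu ts ih =>
    simp only [Term.realize, h.map_fun']
    congr 1
    ext j
    exact ih j

theorem holds_of_injective_hom {M N : Type u} [L.Structure M] [L.Structure N]
    (q : QuasiId L) (hN : q.Holds N) (h : L.Hom M N) (hinj : Function.Injective h.toFun) :
    q.Holds M := by
  intro x hx
  apply hinj
  rw [hom_realize_term, hom_realize_term]
  exact hN _ (fun i => by rw [← hom_realize_term, ← hom_realize_term, hx i])

end Hom

section UP
variable {I : Type u} (U : Ultrafilter I) (A : I → Type u) [iA : ∀ i, L.Structure (A i)]

def upmk (f : ∀ i, A i) : (U : Filter I).Product A :=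
  @Quotient.mk' _ ((U : Filter I).productSetoid A) f

variable {U A}

theorem up_mk_eq {f h : ∀ i, A i} :
    upmk U A f = upmk U A h ↔ ∀ᶠ i in U, f i = h i := Quotient.eq''

theorem up_surj (z : (U : Filter I).Product A) : ∃ f, upmk U A f = z :=
  Quotient.exists_rep z

theorem up_funMap {n : ℕ} (fu : L.Functions n) (x : Fin n → ∀ i, A i) :
    (Structure.funMap fu fun j => upmk U A (x j)) =
      upmk U A (fun i => Structure.funMap fu fun j => x j i) :=
  Ultraproduct.funMap_cast fu x

theorem up_term {k : ℕ} (t : L.Term (Fin k)) (x : Fin k → ∀ i, A i) :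
    (t.realize fun j => upmk U A (x j)) =
      upmk U A (fun i => t.realize fun j => x j i) :=
  Ultraproduct.term_realize_cast x t

/-- Quasi-identities are preserved by ultraproducts. -/
theorem up_holds (q : QuasiId L) (hq : ∀ i, q.Holds (A i)) :
    q.Holds ((U : Filter I).Product A) := by
  intro x hx
  choose y hy using fun j => up_surj (x j)
  rw [show x = fun j => upmk U A (y j) from funext fun j => (hy j).symm] at hx ⊢
  have key : ∀ᶠ i in U, ∀ m, (q.lhs m).realize (fun j => y j i)
      = (q.rhs m).realize (fun j => y j i) := by
    rw [eventually_all]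
    intro m
    have := hx m
    rw [up_term, up_term, up_mk_eq] at this
    exact this
  rw [up_term, up_term, up_mk_eq]
  exact key.mono fun i hi => hq i _ hi

theorem up_const_ne {B : Type u} [L.Structure B] {b₁ b₂ : B} (h : b₁ ≠ b₂) :
    upmk U (fun _ : I => B) (fun _ => b₁) ≠ upmk U (fun _ => B) (fun _ => b₂) := by
  rw [Ne, up_mk_eq]
  intro hc
  obtain ⟨i, hi⟩ := hc.exists
  exact h hi

end UP

section Tail
variable {I : Type u} [Preorder I] [Nonempty I] [IsDirected I (· ≤ ·)]

noncomputable def tailUF (I : Type u) [Preorder I] [Nonempty I] [IsDirected I (· ≤ ·)] :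
    Ultrafilter I :=
  haveI : (atTop : Filter I).NeBot := atTop_neBot_iff.2 ⟨‹_›, ‹_›⟩
  Ultrafilter.of atTop

theorem tailUF_tail (i₀ : I) : ∀ᶠ i in (tailUF I : Filter I), i₀ ≤ i := by
  haveI : (atTop : Filter I).NeBot := atTop_neBot_iff.2 ⟨‹_›, ‹_›⟩
  exact (eventually_ge_atTop i₀).filter_mono (Ultrafilter.of_le atTop)

end Tail

section Diag
variable {I : Type u} (U : Ultrafilter I) (F : Type u) [L.Structure F] [Nonempty F]

noncomputable def diagEmb : F ↪ₑ[L] ((U : Filter I).Product fun _ => F) where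
  toFun m := upmk U (fun _ => F) (fun _ => m)
  map_formula' := by
    intro n φ x
    have h := Ultraproduct.realize_formula_cast (u := U) (M := fun _ : I => F) φ
      (fun j => fun _ => x j)
    rw [eventually_const] at h
    exact h

end Diag

section Prem
variable (q : QuasiId L)

def premForm : L.BoundedFormula Empty q.k :=
  ((List.finRange q.n).map fun i =>
    Term.bdEqual ((q.lhs i).relabel Sum.inr) ((q.rhs i).relabel Sum.inr)).foldr (· ⊓ ·) ⊤

theorem premForm_realize (M : Type u) [L.Structure M] (v : Empty → M) (xs : Fin q.k → M) :
    (premForm q).Realize v xs ↔ ∀ i, (q.lhs i).realize xs = (q.rhs i).realize xs := by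
  rw [premForm, BoundedFormula.realize_foldr_inf]
  constructor
  · intro h i
    have := h _ (List.mem_map.2 ⟨i, List.mem_finRange i, rfl⟩)
    rwa [BoundedFormula.realize_bdEqual, Term.realize_relabel, Term.realize_relabel,
      Sum.elim_comp_inr] at this
  · rintro h φ hφ
    obtain ⟨i, -, rfl⟩ := List.mem_map.1 hφ
    rw [BoundedFormula.realize_bdEqual, Term.realize_relabel, Term.realize_relabel,
      Sum.elim_comp_inr]
    exact h i

theorem premSent_realize (M : Type u) [L.Structure M] :
    M ⊨ (premForm q).exs ↔ q.PremiseSat M := by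
  rw [Sentence.Realize, BoundedFormula.realize_exs]
  exact exists_congr fun xs => premForm_realize q M _ xs

end Prem

theorem realize_const_idem {M : Type u} [L.Structure M] {e : M} (he : IsIdemElem (L := L) M e)
    {k : ℕ} (t : L.Term (Fin k)) : t.realize (fun _ => e) = e := by
  induction t with
  | var => rfl
  | func fu ts ih =>
    rw [Term.realize]
    simp only [ih]
    exact he _ fu

theorem premiseSat_of_idemExt {F : Type u} [L.Structure F]
    (h : HasIdemElemExtension (L := L) F) (q : QuasiId L) : q.PremiseSat F := by
  obtain ⟨G, iG, ⟨emb⟩, e, he⟩ := h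
  rw [← premSent_realize, emb.map_sentence, premSent_realize]
  exact ⟨fun _ => e, fun i => by
    rw [realize_const_idem he, realize_const_idem he]⟩

/-- Compactness: if no elementary extension of `F` has an idempotent element, then some
finite set of function symbols admits no common "fixed point" in `F`. -/
theorem exists_finBad {F : Type u} [L.Structure F] [Nonempty F]
    (h : ¬ HasIdemElemExtension (L := L) F) :
    ∃ Gs : Finset (Σ n : ℕ, L.Functions n),
      ¬ ∃ e : F, ∀ p ∈ Gs, Structure.funMap p.2 (fun _ => e) = e := by
  by_contra hc
  push_neg at hc
  choose e he using hc
  classical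
  letI : DecidableEq (Σ n : ℕ, L.Functions n) := Classical.decEq _
  haveI : IsDirected (Finset (Σ n : ℕ, L.Functions n)) (· ≤ ·) :=
    ⟨fun a b => ⟨a ⊔ b, le_sup_left, le_sup_right⟩⟩
  set U := tailUF (Finset (Σ n : ℕ, L.Functions n)) with hU
  apply h
  refine ⟨(U : Filter (Finset (Σ n : ℕ, L.Functions n))).Product fun _ => F,
      inferInstance, ⟨diagEmb U F⟩,
    upmk U _ (fun Gs => e Gs), ?_⟩
  intro m fu
  rw [show (fun _ : Fin m => upmk U (fun _ => F) fun Gs => e Gs)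
      = fun j : Fin m => upmk U (fun _ => F) ((fun _ => fun Gs => e Gs) j) from rfl,
    up_funMap, up_mk_eq]
  exact (tailUF_tail ({⟨m, fu⟩} : Finset (Σ n : ℕ, L.Functions n))).mono
    fun Gs hGs => he Gs ⟨m, fu⟩ (hGs (Finset.mem_singleton_self _))


section UpHom
variable [L.IsAlgebraic] {I : Type u} (U : Ultrafilter I) {M N : Type u}
  [L.Structure M] [L.Structure N]

def upHom (h : L.Hom M N) :
    L.Hom ((U : Filter I).Product fun _ => M) ((U : Filter I).Product fun _ => N) :=
  homMk
    (@Quotient.map' _ _ ((U : Filter I).productSetoid fun _ => M)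
      ((U : Filter I).productSetoid fun _ => N) (fun f i => h.toFun (f i))
      (fun f g hfg => hfg.mono fun i hi => by simp only [hi]))
    (by
      intro n fu x
      choose y hy using fun j => up_surj (x j)
      rw [show x = fun j => upmk U (fun _ => M) (y j) from funext fun j => (hy j).symm,
        up_funMap]
      show upmk U (fun _ => N) (fun i => h.toFun (Structure.funMap fu fun j => y j i)) = _
      have : ∀ j, (@Quotient.map' _ _ ((U : Filter I).productSetoid fun _ => M)
          ((U : Filter I).productSetoid fun _ => N) (fun f i => h.toFun (f i))
          (fun f g hfg => hfg.mono fun i hi => by simp only [hi])) (upmk U (fun _ => M) (y j))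
          = upmk U (fun _ => N) (fun i => h.toFun (y j i)) := fun j => rfl
      show _ = Structure.funMap fu fun j =>
        (@Quotient.map' _ _ ((U : Filter I).productSetoid fun _ => M)
          ((U : Filter I).productSetoid fun _ => N) (fun f i => h.toFun (f i))
          (fun f g hfg => hfg.mono fun i hi => by simp only [hi])) ∘ (fun j => upmk U (fun _ => M) (y j)) <| j
      simp only [Function.comp, this]
      refine Eq.trans ?_ (up_funMap (U := U) (A := fun _ => N) fu fun j i => h.toFun (y j i)).symm
      apply congrArg
      funext i
      rw [h.map_fun']
      rfl)

theorem upHom_mk (h : L.Hom M N) (f : I → M) :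
    (upHom U h).toFun (upmk U (fun _ => M) f) = upmk U (fun _ => N) (fun i => h.toFun (f i)) :=
  rfl

end UpHom

section Qclosure
variable {Q : ∀ M : Type u, L.Structure M → Prop} (hQ : IsQuasivariety Q)
include hQ

theorem mem_of_injective_hom [L.IsAlgebraic] {M N : Type u} [iM : L.Structure M]
    [iN : L.Structure N] (hN : Q N iN) (h : L.Hom M N) (hinj : Function.Injective h.toFun) :
    Q M iM := by
  obtain ⟨S, hS⟩ := hQ
  rw [hS]
  intro q hq
  exact holds_of_injective_hom q ((hS N iN).1 hN q hq) h hinj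

theorem mem_up {I : Type u} (U : Ultrafilter I) (A : I → Type u) [iA : ∀ i, L.Structure (A i)]
    (hA : ∀ i, Q (A i) (iA i)) : Q ((U : Filter I).Product A) inferInstance := by
  obtain ⟨S, hS⟩ := hQ
  rw [hS]
  intro q hq
  exact up_holds q fun i => (hS (A i) (iA i)).1 (hA i) q hq

end Qclosure

section Zorn
variable [L.IsAlgebraic] {Q : ∀ M : Type u, L.Structure M → Prop}

/-- The identity hom. -/
def idHom (M : Type u) [L.Structure M] : L.Hom M M := homMk id (fun _ _ => rfl)

theorem exists_maximal_sep (hQ : IsQuasivariety Q) {F : Type u} [iF : L.Structure F]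
    (hQF : Q F iF) {a b : F} (hab : a ≠ b) :
    ∃ s : Set (F × F), (IsQCong Q F fun x y => (x, y) ∈ s) ∧ (a, b) ∉ s ∧
      ∀ t : Set (F × F), (IsQCong Q F fun x y => (x, y) ∈ t) → (a, b) ∉ t → s ⊆ t → t = s := by
  classical
  set 𝒮 : Set (Set (F × F)) :=
    {s | (IsQCong Q F fun x y => (x, y) ∈ s) ∧ (a, b) ∉ s} with h𝒮
  have hdiag : {p : F × F | p.1 = p.2} ∈ 𝒮 := by
    refine ⟨⟨F, iF, hQF, idHom F, fun x y => Iff.rfl⟩, hab⟩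
  have hub : ∀ c ⊆ 𝒮, IsChain (· ⊆ ·) c → c.Nonempty →
      ∃ ub ∈ 𝒮, ∀ s ∈ c, s ⊆ ub := by
    rintro c hcS hchain ⟨s₀, hs₀⟩
    haveI : Nonempty c := ⟨⟨s₀, hs₀⟩⟩
    haveI : IsDirected c (· ≤ ·) := by
      constructor
      rintro i j
      rcases eq_or_ne i.1 j.1 with hij | hij
      · exact ⟨j, (Subtype.ext hij).le, le_refl j⟩
      · rcases hchain i.2 j.2 hij with hle | hle
        · exact ⟨j, hle, le_refl j⟩
        · exact ⟨i, le_refl i, hle⟩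
    set U := tailUF c with hU
    have hmem : ∀ i : c, (IsQCong Q F fun x y => (x, y) ∈ i.1) ∧ (a, b) ∉ i.1 :=
      fun i => hcS i.2
    choose A iA hQA h hker using fun i : c => (hmem i).1
    letI : ∀ i : c, L.Structure (A i) := iA
    refine ⟨⋃₀ c, ⟨?_, fun hc => ?_⟩, fun s hs => Set.subset_sUnion_of_mem hs⟩
    · refine ⟨(U : Filter c).Product A, inferInstance, mem_up hQ U A hQA, homMk
        (fun x => upmk U A (fun i => (h i).toFun x)) (fun {n} fu x => ?_), fun x y => ?_⟩
      · show upmk U A (fun i => (h i).toFun (Structure.funMap fu x))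
          = Structure.funMap fu fun j => upmk U A fun i => (h i).toFun (x j)
        rw [up_funMap]
        apply congrArg
        funext i
        rw [(h i).map_fun']
        rfl
      · show ((x, y) ∈ ⋃₀ c) ↔ upmk U A _ = upmk U A _
        rw [up_mk_eq]
        constructor
        · rintro ⟨s, hsc, hxy⟩
          refine (tailUF_tail (⟨s, hsc⟩ : c)).mono fun i hi => ?_
          exact ((hker i) x y).1 (hi hxy)
        · intro hev
          obtain ⟨i, hi⟩ := hev.exists
          exact ⟨i.1, i.2, ((hker i) x y).2 hi⟩
    · obtain ⟨s, hsc, hxy⟩ := hc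
      exact (hcS hsc).2 hxy
  obtain ⟨m, -, hm⟩ := zorn_subset_nonempty 𝒮 hub _ hdiag
  exact ⟨m, hm.prop.1, hm.prop.2, fun t ht hnab hsub =>
    (hm.eq_of_subset ⟨ht, hnab⟩ hsub).symm⟩

end Zorn

section Rng
variable [L.IsAlgebraic] {F A : Type u} [iF : L.Structure F] [iA : L.Structure A]

def rngStruct (h : L.Hom F A) : L.Structure {x : A // x ∈ Set.range h.toFun} where
  funMap {n} fu v := ⟨Structure.funMap fu fun j => (v j).1, by
    choose w hw using fun j => (v j).2
    refine ⟨Structure.funMap fu w, ?_⟩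
    rw [h.map_fun']
    apply congrArg
    funext j
    exact hw j⟩
  RelMap {n} r _ := ((‹L.IsAlgebraic› n).elim r)

def rngIncl (h : L.Hom F A) :
    @Language.Hom L {x : A // x ∈ Set.range h.toFun} A (rngStruct h) iA :=
  @homMk _ _ _ _ (rngStruct h) iA Subtype.val (fun _ _ => rfl)

def rngProj (h : L.Hom F A) :
    @Language.Hom L F {x : A // x ∈ Set.range h.toFun} iF (rngStruct h) :=
  @homMk _ _ _ _ iF (rngStruct h) (fun x => ⟨h.toFun x, x, rfl⟩)
    (fun fu x => Subtype.ext (by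
      show h.toFun (Structure.funMap fu x) = _
      rw [h.map_fun']
      rfl))

variable {Q : ∀ M : Type u, L.Structure M → Prop}

theorem exists_simple_quotient (hQ : IsQuasivariety Q) (hss : IsSemisimple Q)
    (hQF : Q F iF) {a b : F} (hab : a ≠ b) :
    ∃ (S : Type u) (iS : L.Structure S) (π : @Language.Hom L F S iF iS),
      Function.Surjective π.toFun ∧ π.toFun a ≠ π.toFun b ∧ @IsQSimple L Q S iS := by
  classical
  obtain ⟨s, ⟨A, iA, hQA, h, hker⟩, hnab, hmax⟩ := exists_maximal_sep hQ hQF hab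
  letI : L.Structure A := iA
  letI iS : L.Structure {x : A // x ∈ Set.range h.toFun} := rngStruct h
  have hsurj : Function.Surjective (rngProj (iF := iF) (iA := iA) h).toFun := by
    rintro ⟨x, y, rfl⟩
    exact ⟨y, rfl⟩
  have hkerπ : ∀ x y : F, (rngProj (iF := iF) (iA := iA) h).toFun x
      = (rngProj (iF := iF) (iA := iA) h).toFun y ↔ (x, y) ∈ s := by
    intro x y
    constructor
    · intro hxy
      exact (hker x y).2 (congrArg Subtype.val hxy)
    · intro hxy
      exact Subtype.ext ((hker x y).1 hxy)
  have hsep : (rngProj (iF := iF) (iA := iA) h).toFun a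
      ≠ (rngProj (iF := iF) (iA := iA) h).toFun b := fun hc => hnab ((hkerπ a b).1 hc)
  have hQS : Q {x : A // x ∈ Set.range h.toFun} iS :=
    mem_of_injective_hom hQ hQA (rngIncl (iA := iA) h) Subtype.val_injective
  have hSI : @IsQSubdirectlyIrreducible L Q {x : A // x ∈ Set.range h.toFun} iS := by
    refine ⟨⟨_, _, hsep⟩, hQS, ?_⟩
    intro ι R hR hmeet
    by_cases hc : ∃ i, ¬ R i ((rngProj (iF := iF) (iA := iA) h).toFun a)
      ((rngProj (iF := iF) (iA := iA) h).toFun b)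
    · obtain ⟨i, hiRab⟩ := hc
      obtain ⟨C, iC, hQC, e, hek⟩ := hR i
      have hrefl : ∀ z, R i z z := fun z => (hek z z).2 rfl
      have htQC' : IsQCong Q F fun x y =>
          (x, y) ∈ {p : F × F | R i ((rngProj (iF := iF) (iA := iA) h).toFun p.1)
            ((rngProj (iF := iF) (iA := iA) h).toFun p.2)} := by
        refine ⟨C, iC, hQC, homMk (fun z => e.toFun ((rngProj (iF := iF) (iA := iA) h).toFun z))
          (fun fu x => ?_), fun x y => hek _ _⟩
        show e.toFun ((rngProj (iF := iF) (iA := iA) h).toFun (Structure.funMap fu x)) = _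
        rw [(rngProj (iF := iF) (iA := iA) h).map_fun', e.map_fun']
        rfl
      have hst : s ⊆ {p : F × F | R i ((rngProj (iF := iF) (iA := iA) h).toFun p.1)
          ((rngProj (iF := iF) (iA := iA) h).toFun p.2)} := by
        rintro ⟨x, y⟩ hxy
        show R i _ _
        rw [(hkerπ x y).2 hxy]
        exact hrefl _
      have heq := hmax _ htQC' hiRab hst
      refine ⟨i, fun x y => ?_⟩
      obtain ⟨u, rfl⟩ := hsurj x
      obtain ⟨v, rfl⟩ := hsurj y
      constructor
      · intro hR'
        apply (hkerπ u v).2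
        rw [← heq]
        exact hR'
      · intro hxy
        rw [hxy]
        exact hrefl _
    · push_neg at hc
      exact absurd ((hmeet _ _).1 hc) hsep
  exact ⟨_, iS, rngProj (iF := iF) (iA := iA) h, hsurj, hsep, hss _ iS hSI⟩

end Rng

section Diagram

def diagQuasiId {k : ℕ} (eqs : List (L.Term (Fin k) × L.Term (Fin k)))
    (cl cr : L.Term (Fin k)) : QuasiId L :=
  ⟨k, eqs.length, fun i => (eqs.get i).1, fun i => (eqs.get i).2, cl, cr⟩

theorem diagQuasiId_holds_iff {k : ℕ} (eqs : List (L.Term (Fin k) × L.Term (Fin k)))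
    (cl cr : L.Term (Fin k)) (M : Type u) [L.Structure M] :
    (diagQuasiId eqs cl cr).Holds M ↔ ∀ x : Fin k → M,
      (∀ pr ∈ eqs, pr.1.realize x = pr.2.realize x) → cl.realize x = cr.realize x := by
  constructor
  · intro h x hx
    exact h x fun i => hx _ (List.get_mem eqs i)
  · intro h x hx
    refine h x fun pr hpr => ?_
    obtain ⟨i, rfl⟩ := List.mem_iff_get.1 hpr
    exact hx i

variable [L.IsAlgebraic] {Q : ∀ M : Type u, L.Structure M → Prop}

theorem exists_partial_map (hQ : IsQuasivariety Q) {F : Type u} [iF : L.Structure F]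
    (hsc : IsSC Q F) {S : Type u} [iS : L.Structure S] (hQS : Q S iS)
    {a' b' : S} (hab : a' ≠ b') (Y : Finset S) (ha : a' ∈ Y) (hb : b' ∈ Y)
    (G : Finset (Σ n : ℕ, L.Functions n)) :
    ∃ φ : S → F, φ a' ≠ φ b' ∧ ∀ (n : ℕ) (fu : L.Functions n),
      (⟨n, fu⟩ : Σ n : ℕ, L.Functions n) ∈ G →
      ∀ v : Fin n → S, (∀ j, v j ∈ Y) → Structure.funMap fu v ∈ Y →
        φ (Structure.funMap fu v) = Structure.funMap fu (fun j => φ (v j)) := by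
  classical
  set ε := Y.equivFin with hε
  set mkEq : (Σ n : ℕ, L.Functions n) → List (L.Term (Fin Y.card) × L.Term (Fin Y.card)) :=
    fun p => ((Finset.univ : Finset (Fin p.1 → Y)).toList).map fun v =>
      if h : Structure.funMap p.2 (fun j => ((v j : Y) : S)) ∈ Y then
        (Term.func p.2 fun j => Term.var (ε (v j)), Term.var (ε ⟨_, h⟩))
      else (Term.var (ε ⟨a', ha⟩), Term.var (ε ⟨a', ha⟩)) with hmkEq
  set eqs := (G.toList.map mkEq).flatten with heqs
  have hmem2 : ∀ (n : ℕ) (fu : L.Functions n), (⟨n, fu⟩ : Σ n : ℕ, L.Functions n) ∈ G →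
      ∀ (v : Fin n → Y) (h : Structure.funMap fu (fun j => ((v j : Y) : S)) ∈ Y),
      (Term.func fu (fun j => Term.var (ε (v j))), (Term.var (ε ⟨_, h⟩) : L.Term (Fin Y.card)))
        ∈ eqs := by
    intro n fu hfu v h
    rw [heqs]
    rw [List.mem_flatten]
    refine ⟨mkEq ⟨n, fu⟩, List.mem_map.2 ⟨⟨n, fu⟩, Finset.mem_toList.2 hfu, rfl⟩, ?_⟩
    rw [hmkEq]
    refine List.mem_map.2 ⟨v, Finset.mem_toList.2 (Finset.mem_univ v), ?_⟩
    rw [dif_pos h]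
  have hmem1 : ∀ pr ∈ eqs, pr.1.realize (fun j => ((ε.symm j : Y) : S))
      = pr.2.realize (fun j => ((ε.symm j : Y) : S)) := by
    intro pr hpr
    rw [heqs, List.mem_flatten] at hpr
    obtain ⟨lst, hlst, hpr⟩ := hpr
    obtain ⟨p, hpG, rfl⟩ := List.mem_map.1 hlst
    rw [hmkEq] at hpr
    obtain ⟨v, -, rfl⟩ := List.mem_map.1 hpr
    by_cases h : Structure.funMap p.2 (fun j => ((v j : Y) : S)) ∈ Y
    · rw [dif_pos h]
      show Structure.funMap p.2 (fun j => Term.realize _ (Term.var (ε (v j)))) = _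
      simp only [Term.realize, Equiv.symm_apply_apply]
    · rw [dif_neg h]
  have hqS : ¬ (diagQuasiId eqs (Term.var (ε ⟨a', ha⟩)) (Term.var (ε ⟨b', hb⟩))).Holds S := by
    rw [diagQuasiId_holds_iff]
    intro hc
    have := hc (fun j => ((ε.symm j : Y) : S)) hmem1
    simp only [Term.realize, Equiv.symm_apply_apply] at this
    exact hab this
  have hqF : ¬ (diagQuasiId eqs (Term.var (ε ⟨a', ha⟩)) (Term.var (ε ⟨b', hb⟩))).Holds F :=
    fun hq => hqS (hsc _ hq S iS hQS)
  rw [diagQuasiId_holds_iff] at hqF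
  push_neg at hqF
  obtain ⟨y, hy, hne⟩ := hqF
  refine ⟨fun z => if hz : z ∈ Y then y (ε ⟨z, hz⟩) else y (ε ⟨a', ha⟩), ?_, ?_⟩
  · simp only [dif_pos ha, dif_pos hb]
    intro hc
    apply hne
    simp only [Term.realize]
    exact hc
  · intro n fu hfu v hv hval
    have hkey := hy _ (hmem2 n fu hfu (fun j => ⟨v j, hv j⟩)
      (by simpa using hval))
    simp only [Term.realize] at hkey
    have hφ : ∀ (z : S) (hz : z ∈ Y),
        (fun z => if hz : z ∈ Y then y (ε ⟨z, hz⟩) else y (ε ⟨a', ha⟩)) z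
          = y (ε ⟨z, hz⟩) := fun z hz => dif_pos hz
    rw [hφ _ hval]
    have h1 : (fun j => (fun z => if hz : z ∈ Y then y (ε ⟨z, hz⟩) else y (ε ⟨a', ha⟩)) (v j))
        = fun j => y (ε ⟨v j, hv j⟩) := funext fun j => hφ _ (hv j)
    rw [h1]
    exact hkey.symm

end Diagram

section SimpleEmb
variable [L.IsAlgebraic] {Q : ∀ M : Type u, L.Structure M → Prop}

theorem simple_into_up (hQ : IsQuasivariety Q) {F : Type u} [iF : L.Structure F]
    (hQF : Q F iF) (hsc : IsSC Q F)
    {S : Type u} [iS : L.Structure S] (hsimp : @IsQSimple L Q S iS) :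
    ∃ (I : Type u) (U : Ultrafilter I)
      (Ψ : L.Hom S ((U : Filter I).Product fun _ => F)),
      Function.Injective Ψ.toFun := by
  classical
  obtain ⟨⟨a', b', hab⟩, hQS, hsimple⟩ := hsimp
  haveI : IsDirected (Finset S × Finset (Σ n : ℕ, L.Functions n)) (· ≤ ·) :=
    ⟨fun a b => ⟨a ⊔ b, le_sup_left, le_sup_right⟩⟩
  set U := tailUF (Finset S × Finset (Σ n : ℕ, L.Functions n)) with hU
  have hpm := fun i : Finset S × Finset (Σ n : ℕ, L.Functions n) =>
    exists_partial_map hQ hsc hQS hab (insert a' (insert b' i.1))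
      (Finset.mem_insert_self _ _)
      (Finset.mem_insert_of_mem (Finset.mem_insert_self _ _)) i.2
  choose φ hφab hφcomm using hpm
  refine ⟨_, U, homMk (fun z => upmk U (fun _ => F) fun i => φ i z) (fun {n} fu x => ?_), ?_⟩
  · show upmk U (fun _ => F) (fun i => φ i (Structure.funMap fu x))
      = Structure.funMap fu fun j => upmk U (fun _ => F) fun i => φ i (x j)
    rw [up_funMap, up_mk_eq]
    refine (tailUF_tail ((Finset.image x Finset.univ ∪ {Structure.funMap fu x},
      ({⟨n, fu⟩} : Finset (Σ n : ℕ, L.Functions n))) :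
        Finset S × Finset (Σ n : ℕ, L.Functions n))).mono fun i hi => ?_
    refine hφcomm i n fu (hi.2 (Finset.mem_singleton_self _)) x (fun j => ?_) ?_
    · exact Finset.mem_insert_of_mem (Finset.mem_insert_of_mem
        (hi.1 (Finset.mem_union_left _ (Finset.mem_image_of_mem x (Finset.mem_univ j)))))
    · exact Finset.mem_insert_of_mem (Finset.mem_insert_of_mem
        (hi.1 (Finset.mem_union_right _ (Finset.mem_singleton_self _))))
  · have hne : upmk U (fun _ => F) (fun i => φ i a') ≠ upmk U (fun _ => F) (fun i => φ i b') := by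
      rw [Ne, up_mk_eq]
      intro hc
      obtain ⟨i, hi⟩ := hc.exists
      exact hφab i hi
    have hker : IsQCong Q S (fun x y =>
        upmk U (fun _ => F) (fun i => φ i x) = upmk U (fun _ => F) (fun i => φ i y)) :=
      ⟨_, _, mem_up hQ U (fun _ => F) (fun _ => hQF),
        homMk (fun z => upmk U (fun _ => F) fun i => φ i z) (fun {n} fu x => by
          show upmk U (fun _ => F) (fun i => φ i (Structure.funMap fu x))
            = Structure.funMap fu fun j => upmk U (fun _ => F) fun i => φ i (x j)
          rw [up_funMap, up_mk_eq]
          refine (tailUF_tail ((Finset.image x Finset.univ ∪ {Structure.funMap fu x},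
            ({⟨n, fu⟩} : Finset (Σ n : ℕ, L.Functions n))) :
              Finset S × Finset (Σ n : ℕ, L.Functions n))).mono fun i hi => ?_
          refine hφcomm i n fu (hi.2 (Finset.mem_singleton_self _)) x (fun j => ?_) ?_
          · exact Finset.mem_insert_of_mem (Finset.mem_insert_of_mem
              (hi.1 (Finset.mem_union_left _ (Finset.mem_image_of_mem x (Finset.mem_univ j)))))
          · exact Finset.mem_insert_of_mem (Finset.mem_insert_of_mem
              (hi.1 (Finset.mem_union_right _ (Finset.mem_singleton_self _))))), 
        fun x y => Iff.rfl⟩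
    rcases hsimple _ hker with h | h
    · exact fun x y hxy => (h x y).1 hxy
    · exact absurd (h a' b') hne

end SimpleEmb

section Final
variable {Q : ∀ M : Type u, L.Structure M → Prop}

theorem subsingleton_of_idem {F : Type u} [iF : L.Structure F] (hsc : IsSC Q F)
    (noidem : ∃ Gs : Finset (Σ n : ℕ, L.Functions n),
      ¬∃ e : F, ∀ pr ∈ Gs, Structure.funMap pr.2 (fun _ : Fin pr.1 => e) = e)
    {M : Type u} [iM : L.Structure M] (hQM : Q M iM) (e : M)
    (he : IsIdemElem (L := L) M e) : Subsingleton M := by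
  obtain ⟨Gs, hGs⟩ := noidem
  have hHold : (⟨3, Gs.toList.length,
      fun i => Term.func (Gs.toList.get i).2 (fun _ => Term.var 0),
      fun _ => Term.var 0, Term.var 1, Term.var 2⟩ : QuasiId L).Holds F := by
    intro x hx
    exfalso
    apply hGs
    refine ⟨x 0, fun pr hpr => ?_⟩
    obtain ⟨i, hig⟩ := List.mem_iff_get.1 (Finset.mem_toList.2 hpr)
    rw [← hig]
    exact hx i
  have hM := hsc _ hHold M iM hQM
  refine ⟨fun m₁ m₂ => ?_⟩
  have := hM ![e, m₁, m₂] (fun i => he _ _)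
  exact this

theorem holds_F_of_holds_B [L.IsAlgebraic] (hQ : IsQuasivariety Q) (hss : IsSemisimple Q)
    {F : Type u} [iF : L.Structure F] {g : ℕ → F} (hF : IsFreeAlgOn Q F g) (hsc : IsSC Q F)
    (noidem : ∃ Gs : Finset (Σ n : ℕ, L.Functions n),
      ¬∃ e : F, ∀ pr ∈ Gs, Structure.funMap pr.2 (fun _ : Fin pr.1 => e) = e)
    {B : Type u} [iB : L.Structure B] (hQB : Q B iB) (hBnt : Nontrivial B)
    (p : QuasiId L) (hpB : p.Holds B) : p.Holds F := by
  by_contra hpF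
  unfold QuasiId.Holds at hpF
  push_neg at hpF
  obtain ⟨x, hx, hne⟩ := hpF
  obtain ⟨S, iS, π, hsurj, hsep, hsimp⟩ := exists_simple_quotient hQ hss hF.1 hne
  have hpS : ¬ @QuasiId.Holds L p S iS := by
    intro hp
    apply hsep
    rw [hom_realize_term π p.cl x, hom_realize_term π p.cr x]
    exact hp (π.toFun ∘ x) (fun i => by
      rw [← hom_realize_term π (p.lhs i) x, ← hom_realize_term π (p.rhs i) x, hx i])
  obtain ⟨I, U, Ψ, hΨ⟩ := simple_into_up hQ hF.1 hsc hsimp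
  obtain ⟨b₀, b₁, hb01⟩ := hBnt
  obtain ⟨h₀, -⟩ := (hF.2.2 B iB hQB (fun _ => b₀)).exists
  have hΦfun : ∀ {n : ℕ} (fu : L.Functions n) (v : Fin n → S),
      (upHom U h₀).toFun (Ψ.toFun (Structure.funMap fu v))
        = Structure.funMap fu fun j => (upHom U h₀).toFun (Ψ.toFun (v j)) := by
    intro n fu v
    rw [Ψ.map_fun', (upHom U h₀).map_fun']
    rfl
  have hQP := mem_up hQ U (fun _ : I => B) (fun _ => hQB)
  have hker : IsQCong Q S (fun x y =>
      (upHom U h₀).toFun (Ψ.toFun x) = (upHom U h₀).toFun (Ψ.toFun y)) :=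
    ⟨_, _, hQP, homMk (fun z => (upHom U h₀).toFun (Ψ.toFun z)) (fun fu v => hΦfun fu v),
      fun _ _ => Iff.rfl⟩
  rcases hsimp.2.2 _ hker with h | h
  · apply hpS
    exact holds_of_injective_hom p (up_holds p fun _ => hpB)
      (homMk (fun z => (upHom U h₀).toFun (Ψ.toFun z)) (fun fu v => hΦfun fu v))
      (fun x y hxy => (h x y).1 hxy)
  · obtain ⟨⟨sa, sb, hsne⟩, -, -⟩ := hsimp
    have hidem : IsIdemElem (L := L) ((U : Filter I).Product fun _ => B)
        ((upHom U h₀).toFun (Ψ.toFun sa)) := by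
      intro m fu
      have h1 : (fun _ : Fin m => (upHom U h₀).toFun (Ψ.toFun sa))
          = fun j => (upHom U h₀).toFun (Ψ.toFun ((fun _ => sa) j)) := rfl
      rw [h1, ← hΦfun]
      exact h _ _
    have hnt : Nontrivial ((U : Filter I).Product fun _ => B) :=
      ⟨upmk U (fun _ : I => B) (fun _ => b₀), upmk U (fun _ : I => B) (fun _ => b₁),
        up_const_ne (L := L) (U := U) (I := I) hb01⟩
    have hssg := subsingleton_of_idem hsc noidem hQP _ hidem
    obtain ⟨u, v, huv⟩ := hnt
    exact huv (hssg.elim u v)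

end Final

end SCAux

theorem stmt_4 {L : FirstOrder.Language.{u, u}} [L.IsAlgebraic]
    (Q : ∀ M : Type u, L.Structure M → Prop) (hQ : IsQuasivariety Q)
    (F : Type u) [iF : L.Structure F] (g : ℕ → F) (hF : IsFreeAlgOn Q F g)
    (hASC : IsASC Q F) (hss : IsSemisimple Q) :
    IsSC Q F ↔ (HasIdemElemExtension (L := L) F ∨ IsMinimalQuasivariety Q) := by
  classical
  have hFnt : Nontrivial F := ⟨g 0, g 1, fun hc => Nat.zero_ne_one (hF.2.1 hc)⟩
  haveI : Nonempty F := ⟨g 0⟩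
  constructor
  · intro hsc
    by_cases hie : HasIdemElemExtension (L := L) F
    · exact Or.inl hie
    · right
      have noidem := SCAux.exists_finBad hie
      refine ⟨⟨F, iF, hF.1, hFnt⟩, ?_⟩
      intro Q' hQ' hsub
      rw [or_iff_not_imp_left]
      intro hnt
      push_neg at hnt
      obtain ⟨B, iB, hQ'B, hBns⟩ := hnt
      have hBnt : Nontrivial B := hBns
      obtain ⟨S', hS'⟩ := hQ'
      intro M iM
      constructor
      · intro hQM
        rw [hS']
        intro q hqS'
        have hqB : @QuasiId.Holds L q B iB := (hS' B iB).1 hQ'B q hqS'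
        have hqF : q.Holds F := SCAux.holds_F_of_holds_B hQ hss hF hsc noidem
          (hsub B iB hQ'B) hBnt q hqB
        exact hsc q hqF M iM hQM
      · exact hsub M iM
  · intro h
    rcases h with hie | hmin
    · intro q hq M iM hQM
      exact hASC q hq (SCAux.premiseSat_of_idemExt hie q) M iM hQM
    · obtain ⟨-, hminimal⟩ := hmin
      have hQ''qv : IsQuasivariety (L := L)
          (fun M iM => ∀ q : QuasiId L, q.Holds F → @QuasiId.Holds L q M iM) :=
        ⟨{q | q.Holds F}, fun M iM => Iff.rfl⟩
      have hsub : SubclassOf (L := L)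
          (fun M iM => ∀ q : QuasiId L, q.Holds F → @QuasiId.Holds L q M iM) Q := by
        intro M iM hM
        obtain ⟨S0, hS0⟩ := hQ
        rw [hS0]
        intro q hqS0
        exact hM q ((hS0 F iF).1 hF.1 q hqS0)
      rcases hminimal _ hQ''qv hsub with htriv | hiff
      · have hss' := htriv F iF (fun q hq => hq)
        obtain ⟨u, v, huv⟩ := hFnt
        exact absurd (hss'.elim u v) huv
      · intro q hq M iM hQM
        exact (hiff M iM).1 hQM q hq
end

section
/- If V is a minimal discriminator variety, then V is minimal as a quasivariety. -/
open FirstOrder Language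

universe u

variable {L : FirstOrder.Language.{u, u}}

namespace MDV

open scoped Classical

variable {L : FirstOrder.Language.{u, u}}

def dfn (t : L.Term (Fin 3)) (M : Type u) [L.Structure M] (a b c : M) : M :=
  t.realize ![a, b, c]

def swfn (t : L.Term (Fin 3)) (M : Type u) [L.Structure M] (a b c e : M) : M :=
  dfn t M (dfn t M a b c) (dfn t M a b e) e

def dT (t : L.Term (Fin 3)) {γ : Type*} (a b c : L.Term γ) : L.Term γ :=
  t.subst ![a, b, c]

def swT (t : L.Term (Fin 3)) {γ : Type*} (a b c e : L.Term γ) : L.Term γ :=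
  dT t (dT t a b c) (dT t a b e) e

@[simp] lemma realize_dT {t : L.Term (Fin 3)} {γ : Type*} {M : Type u} [L.Structure M]
    (a b c : L.Term γ) (v : γ → M) :
    (dT t a b c).realize v = dfn t M (a.realize v) (b.realize v) (c.realize v) := by
  simp only [dT, dfn, Term.realize_subst]
  congr 1
  funext i
  fin_cases i <;> simp

@[simp] lemma realize_swT {t : L.Term (Fin 3)} {γ : Type*} {M : Type u} [L.Structure M]
    (a b c e : L.Term γ) (v : γ → M) :
    (swT t a b c e).realize v
      = swfn t M (a.realize v) (b.realize v) (c.realize v) (e.realize v) := by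
  simp [swT, swfn]

lemma discr_d {t : L.Term (Fin 3)} {E : Type u} [L.Structure E] (h : IsDiscrTermOn t E)
    (a b c : E) : dfn t E a b c = if a = b then c else a := by
  by_cases hab : a = b
  · rw [if_pos hab]; exact (h a b c).2 hab
  · rw [if_neg hab]; exact (h a b c).1 hab

lemma discr_sw {t : L.Term (Fin 3)} {E : Type u} [L.Structure E] (h : IsDiscrTermOn t E)
    (a b c e : E) : swfn t E a b c e = if a = b then c else e := by
  simp only [swfn, discr_d h]
  by_cases hab : a = b
  · simp only [hab, if_pos]
    by_cases hce : c = e <;> simp [hce]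
  · simp [hab]


section Core

variable (V : ∀ M : Type u, L.Structure M → Prop) (t : L.Term (Fin 3))

/-- every identity valid in all algebras where `t` is a discriminator holds throughout `V`. -/
def Transfers : Prop :=
  ∀ e : EqId L,
    (∀ (E : Type u) (iE : L.Structure E), @IsDiscrTermOn L t E iE → @EqId.Holds L e E iE) →
    ∀ (M : Type u) (iM : L.Structure M), V M iM → @EqId.Holds L e M iM

variable {V t} (tr : Transfers V t) {M : Type u} [iM : L.Structure M] (hM : V M iM)

include tr hM

lemma vd1 (a c : M) : dfn t M a a c = c := by
  have h := tr ⟨2, dT t (.var 0) (.var 0) (.var 1), .var 1⟩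
    (fun E iE hE v => by simp [discr_d hE]) M iM hM ![a, c]
  simpa using h

lemma vd2 (a b : M) : dfn t M a b a = a := by
  have h := tr ⟨2, dT t (.var 0) (.var 1) (.var 0), .var 0⟩
    (fun E iE hE v => by by_cases hv : v 0 = v 1 <;> simp [discr_d hE, hv]) M iM hM ![a, b]
  simpa using h

lemma vd3 (a b : M) : dfn t M a b b = a := by
  have h := tr ⟨2, dT t (.var 0) (.var 1) (.var 1), .var 0⟩
    (fun E iE hE v => by by_cases hv : v 0 = v 1 <;> simp [discr_d hE, hv]) M iM hM ![a, b]
  simpa using h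

lemma vd_idem (p q z : M) : dfn t M p q (dfn t M p q z) = dfn t M p q z := by
  have h := tr ⟨3, dT t (.var 0) (.var 1) (dT t (.var 0) (.var 1) (.var 2)),
      dT t (.var 0) (.var 1) (.var 2)⟩
    (fun E iE hE v => by by_cases hv : v 0 = v 1 <;> simp [discr_d hE, hv]) M iM hM ![p, q, z]
  simpa using h

lemma vsw_swap (x y z : M) : swfn t M x y x z = swfn t M x y y z := by
  have h := tr ⟨3, swT t (.var 0) (.var 1) (.var 0) (.var 2),
      swT t (.var 0) (.var 1) (.var 1) (.var 2)⟩
    (fun E iE hE v => by by_cases hv : v 0 = v 1 <;> simp [discr_sw hE, hv]) M iM hM ![x, y, z]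
  simpa using h

lemma vsw_decode (p r m z : M) :
    swfn t M p r (swfn t M p r m z) p = dfn t M p r m := by
  have h := tr ⟨4, swT t (.var 0) (.var 1) (swT t (.var 0) (.var 1) (.var 2) (.var 3)) (.var 0),
      dT t (.var 0) (.var 1) (.var 2)⟩
    (fun E iE hE v => by
      by_cases hv : v 0 = v 1 <;> simp [discr_sw hE, discr_d hE, hv]) M iM hM ![p, r, m, z]
  simpa using h

lemma vdec1 (x y z : M) : swfn t M x y x (dfn t M x y z) = x := by
  have h := tr ⟨3, swT t (.var 0) (.var 1) (.var 0) (dT t (.var 0) (.var 1) (.var 2)), .var 0⟩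
    (fun E iE hE v => by by_cases hv : v 0 = v 1 <;> simp [discr_sw hE, discr_d hE, hv])
    M iM hM ![x, y, z]
  simpa using h

lemma vdec2 (x y z : M) : swfn t M x y x (dfn t M y x z) = y := by
  have h := tr ⟨3, swT t (.var 0) (.var 1) (.var 0) (dT t (.var 1) (.var 0) (.var 2)), .var 1⟩
    (fun E iE hE v => by
      by_cases hv : v 0 = v 1
      · simp [discr_sw hE, discr_d hE, hv]
      · simp [discr_sw hE, discr_d hE, hv, Ne.symm hv]) M iM hM ![x, y, z]
  simpa using h

lemma vsw_absorb (p q a b : M) :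
    swfn t M p q p (swfn t M p q a b) = swfn t M p q p b := by
  have h := tr ⟨4, swT t (.var 0) (.var 1) (.var 0) (swT t (.var 0) (.var 1) (.var 2) (.var 3)),
      swT t (.var 0) (.var 1) (.var 0) (.var 3)⟩
    (fun E iE hE v => by by_cases hv : v 0 = v 1 <;> simp [discr_sw hE, hv]) M iM hM ![p, q, a, b]
  simpa using h

end Core

def Hfn (t : L.Term (Fin 3)) (M : Type u) [L.Structure M] (w p q p3 q3 : M) : M :=
  swfn t M w p3 p (swfn t M w q3 q p)

def HT (t : L.Term (Fin 3)) (w p q p3 q3 : L.Term (Fin 4)) : L.Term (Fin 4) :=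
  swT t w p3 p (swT t w q3 q p)

@[simp] lemma realize_HT {t : L.Term (Fin 3)} {M : Type u} [L.Structure M]
    (w p q p3 q3 : L.Term (Fin 4)) (v : Fin 4 → M) :
    (HT t w p q p3 q3).realize v
      = Hfn t M (w.realize v) (p.realize v) (q.realize v) (p3.realize v) (q3.realize v) := by
  simp [HT, Hfn]

section Core2

variable {V : ∀ M : Type u, L.Structure M → Prop} {t : L.Term (Fin 3)}
variable (tr : Transfers V t) {M : Type u} [iM : L.Structure M] (hM : V M iM)

include tr hM

lemma vG1 (p q p3 q3 : M) :
    swfn t M p3 q3 p3 p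
      = swfn t M p3 q3 p3 (Hfn t M (swfn t M p q p p3) p q p3 q3) := by
  have h := tr ⟨4, swT t (.var 2) (.var 3) (.var 2) (.var 0),
      swT t (.var 2) (.var 3) (.var 2)
        (HT t (swT t (.var 0) (.var 1) (.var 0) (.var 2)) (.var 0) (.var 1) (.var 2) (.var 3))⟩
    (fun E iE hE v => by
      simp only [EqId.Holds, realize_swT, realize_HT, Term.realize_var, Hfn]
      simp only [discr_sw hE]
      split_ifs <;> simp_all) M iM hM ![p, q, p3, q3]
  simpa [Hfn] using h

lemma vG2 (p q p3 q3 : M) :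
    swfn t M p3 q3 p3 q
      = swfn t M p3 q3 p3 (Hfn t M (swfn t M p q p q3) p q p3 q3) := by
  have h := tr ⟨4, swT t (.var 2) (.var 3) (.var 2) (.var 1),
      swT t (.var 2) (.var 3) (.var 2)
        (HT t (swT t (.var 0) (.var 1) (.var 0) (.var 3)) (.var 0) (.var 1) (.var 2) (.var 3))⟩
    (fun E iE hE v => by
      simp only [EqId.Holds, realize_swT, realize_HT, Term.realize_var, Hfn]
      simp only [discr_sw hE]
      split_ifs <;> simp_all) M iM hM ![p, q, p3, q3]
  simpa [Hfn] using h

end Core2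


@[simp] lemma append_right' {k : ℕ} {α : Sort*} (u : Fin k → α) (v : Fin k → α) (i : Fin k) :
    Fin.append u v (i.addNat k) = v i := by
  have h : (i.addNat k) = Fin.natAdd k i := by
    ext; simp [Fin.natAdd, Fin.addNat, Nat.add_comm]
  rw [h, Fin.append_right]

section Core3

variable {V : ∀ M : Type u, L.Structure M → Prop} {t : L.Term (Fin 3)}
variable (tr : Transfers V t) {M : Type u} [iM : L.Structure M] (hM : V M iM)

include tr hM

lemma vfun_comm {m : ℕ} (f : L.Functions m) (p q : M) (z : Fin m → M) :
    swfn t M p q p (Structure.funMap f z)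
      = swfn t M p q p (Structure.funMap f (fun i => swfn t M p q p (z i))) := by
  have h := tr ⟨m + 2,
      swT t (.var (Fin.natAdd m 0)) (.var (Fin.natAdd m 1)) (.var (Fin.natAdd m 0))
        (Term.func f (fun i => .var (Fin.castAdd 2 i))),
      swT t (.var (Fin.natAdd m 0)) (.var (Fin.natAdd m 1)) (.var (Fin.natAdd m 0))
        (Term.func f (fun i =>
          swT t (.var (Fin.natAdd m 0)) (.var (Fin.natAdd m 1)) (.var (Fin.natAdd m 0))
            (.var (Fin.castAdd 2 i))))⟩
    (fun E iE hE v => by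
      simp only [EqId.Holds, realize_swT, Term.realize_func, Term.realize_var]
      by_cases hv : v (Fin.natAdd m 0) = v (Fin.natAdd m 1) <;>
        simp [discr_sw hE, hv]) M iM hM (Fin.append z ![p, q])
  simpa [Fin.append_left, Fin.append_right, append_right'] using h

lemma vterm_comm {k : ℕ} (σ : L.Term (Fin k)) (α β : M) (x y : Fin k → M) :
    σ.realize (fun j => swfn t M α β (x j) (y j))
      = swfn t M α β (σ.realize x) (σ.realize y) := by
  have h := tr ⟨k + k + 2,
      σ.subst (fun j => swT t (.var (Fin.natAdd (k + k) 0)) (.var (Fin.natAdd (k + k) 1))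
        (.var (Fin.castAdd 2 (Fin.castAdd k j))) (.var (Fin.castAdd 2 (Fin.natAdd k j)))),
      swT t (.var (Fin.natAdd (k + k) 0)) (.var (Fin.natAdd (k + k) 1))
        (σ.subst (fun j => .var (Fin.castAdd 2 (Fin.castAdd k j))))
        (σ.subst (fun j => .var (Fin.castAdd 2 (Fin.natAdd k j))))⟩
    (fun E iE hE v => by
      simp only [EqId.Holds, Term.realize_subst, realize_swT, Term.realize_var]
      by_cases hv : v (Fin.natAdd (k + k) 0) = v (Fin.natAdd (k + k) 1) <;>
        simp [discr_sw hE, hv]) M iM hM (Fin.append (Fin.append x y) ![α, β])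
  simpa [Term.realize_subst, Fin.append_left, Fin.append_right, append_right'] using h

end Core3

section Cong

variable {A : Type u} [iA : L.Structure A]

/-- a congruence, as a set of pairs. -/
def IsCongSet (A : Type u) [L.Structure A] (c : Set (A × A)) : Prop :=
  Equivalence (fun x y => (x, y) ∈ c) ∧
    ∀ (m : ℕ) (f : L.Functions m) (a b : Fin m → A),
      (∀ i, (a i, b i) ∈ c) → (Structure.funMap f a, Structure.funMap f b) ∈ c

lemma chain_bound {X : Type*} {cc : Set (Set X)} (hc : IsChain (· ⊆ ·) cc) (hne : cc.Nonempty)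
    {m : ℕ} (g : Fin m → Set X) (hg : ∀ i, g i ∈ cc) : ∃ s ∈ cc, ∀ i, g i ⊆ s := by
  induction m with
  | zero => exact ⟨hne.choose, hne.choose_spec, fun i => i.elim0⟩
  | succ n ih =>
    obtain ⟨s, hs, hsub⟩ := ih (fun i => g i.castSucc) (fun i => hg i.castSucc)
    rcases hc.total hs (hg (Fin.last n)) with h | h
    · refine ⟨g (Fin.last n), hg _, fun i => ?_⟩
      refine Fin.lastCases ?_ (fun j => ?_) i
      · exact subset_rfl
      · exact (hsub j).trans h
    · refine ⟨s, hs, fun i => ?_⟩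
      refine Fin.lastCases ?_ (fun j => ?_) i
      · exact h
      · exact hsub j

lemma exists_maximal_avoiding (P : Set (A × A)) (hP : ∀ p ∈ P, p.1 ≠ p.2) :
    ∃ c : Set (A × A), IsCongSet (L := L) A c ∧ (∀ p ∈ P, p ∉ c) ∧
      ∀ c' : Set (A × A), IsCongSet (L := L) A c' → (∀ p ∈ P, p ∉ c') → c ⊆ c' → c' = c := by
  set S : Set (Set (A × A)) := {c | IsCongSet (L := L) A c ∧ ∀ p ∈ P, p ∉ c} with hS
  have hΔ : {p : A × A | p.1 = p.2} ∈ S := by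
    refine ⟨⟨⟨fun x => rfl, fun h => h.symm, fun h h' => h.trans h'⟩, ?_⟩, ?_⟩
    · intro m f a b hab
      have : a = b := funext fun i => hab i
      simp [this]
    · intro p hp hmem
      exact hP p hp hmem
  have hcb : ∀ cc ⊆ S, IsChain (fun x1 x2 => x1 ⊆ x2) cc → cc.Nonempty →
      ∃ ub ∈ S, ∀ s ∈ cc, s ⊆ ub := by
    intro cc hccS hchain hne
    refine ⟨⋃₀ cc, ⟨⟨⟨?_, ?_, ?_⟩, ?_⟩, ?_⟩, fun s hs => Set.subset_sUnion_of_mem hs⟩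
    · intro x
      obtain ⟨s, hs⟩ := hne
      exact ⟨s, hs, (hccS hs).1.1.refl x⟩
    · intro x y hxy
      obtain ⟨s, hs, hxy⟩ := hxy
      exact ⟨s, hs, (hccS hs).1.1.symm hxy⟩
    · intro x y z hxy hyz
      obtain ⟨s1, hs1, hxy⟩ := hxy
      obtain ⟨s2, hs2, hyz⟩ := hyz
      rcases hchain.total hs1 hs2 with h | h
      · exact ⟨s2, hs2, (hccS hs2).1.1.trans (h hxy) hyz⟩
      · exact ⟨s1, hs1, (hccS hs1).1.1.trans hxy (h hyz)⟩
    · intro m f a b hab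
      have : ∀ i, ∃ s, s ∈ cc ∧ (a i, b i) ∈ s := fun i => by
        obtain ⟨s, hs, h⟩ := hab i
        exact ⟨s, hs, h⟩
      choose g hg1 hg2 using this
      obtain ⟨s, hs, hsub⟩ := chain_bound hchain hne g hg1
      exact ⟨s, hs, (hccS hs).1.2 m f a b (fun i => hsub i (hg2 i))⟩
    · intro p hp hmem
      obtain ⟨s, hs, h⟩ := hmem
      exact (hccS hs).2 p hp h
  obtain ⟨μ, -, hmax⟩ := zorn_subset_nonempty S hcb _ hΔ
  exact ⟨μ, hmax.1.1, hmax.1.2, fun c' h1 h2 hsub' =>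
    Set.Subset.antisymm (hmax.2 ⟨h1, h2⟩ hsub') hsub'⟩

variable (c : Set (A × A)) (hc : IsCongSet (L := L) A c)

def congSetoid : Setoid A := ⟨fun x y => (x, y) ∈ c, hc.1⟩

abbrev QuotAlg : Type u := Quotient (congSetoid c hc)

noncomputable instance quotStruct : L.Structure (QuotAlg c hc) where
  funMap := fun {m} f x => Quotient.mk _ (Structure.funMap f (fun i => (x i).out))
  RelMap := fun {m} _ _ => False

lemma mk_funMap {m : ℕ} (f : L.Functions m) (a : Fin m → A) :
    (Quotient.mk (congSetoid c hc) (Structure.funMap f a) : QuotAlg c hc)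
      = Structure.funMap f (fun i => Quotient.mk (congSetoid c hc) (a i)) := by
  show _ = Quotient.mk _ (Structure.funMap f (fun i => (Quotient.mk (congSetoid c hc) (a i)).out))
  apply Quotient.sound
  exact hc.1.symm (hc.2 _ f _ _ (fun i => Quotient.mk_out (s := congSetoid c hc) (a i)))

lemma realize_mk {γ : Type*} (τ : L.Term γ) (v : γ → A) :
    τ.realize (fun j => (Quotient.mk (congSetoid c hc) (v j) : QuotAlg c hc))
      = Quotient.mk (congSetoid c hc) (τ.realize v) := by
  induction τ with
  | var j => simp
  | func f ts ih =>
    simp only [Term.realize_func]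
    rw [show (fun i => Term.realize (fun j => (Quotient.mk (congSetoid c hc) (v j) : QuotAlg c hc)) (ts i))
        = fun i => Quotient.mk (congSetoid c hc) ((ts i).realize v) from funext fun i => ih i]
    exact (mk_funMap c hc f _).symm

lemma realize_out {γ : Type*} (τ : L.Term γ) (x : γ → QuotAlg c hc) :
    τ.realize x = Quotient.mk (congSetoid c hc) (τ.realize (fun j => (x j).out)) := by
  conv_lhs => rw [show x = fun j => (Quotient.mk (congSetoid c hc) ((x j).out)) from
    funext fun j => (Quotient.out_eq (x j)).symm]
  exact realize_mk c hc τ _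

lemma quot_eqid (e : EqId L) (he : e.Holds A) : e.Holds (QuotAlg c hc) := by
  intro x
  rw [realize_out, realize_out]
  exact congrArg _ (he _)

end Cong

section Fold

variable (t : L.Term (Fin 3))

def combE (M : Type u) [L.Structure M] (x y : M × M) : M × M :=
  (dfn t M x.1 x.2 y.1, dfn t M x.2 x.1 y.2)

def combT {γ : Type*} (x y : L.Term γ × L.Term γ) : L.Term γ × L.Term γ :=
  (dT t x.1 x.2 y.1, dT t x.2 x.1 y.2)

lemma fold_realize {γ : Type*} {M : Type u} [L.Structure M] (v : γ → M)
    (l : List (L.Term γ × L.Term γ)) (acc : L.Term γ × L.Term γ) :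
    ((l.foldl (combT t) acc).1.realize v, (l.foldl (combT t) acc).2.realize v)
      = (l.map (fun p => (p.1.realize v, p.2.realize v))).foldl (combE t M)
          (acc.1.realize v, acc.2.realize v) := by
  induction l generalizing acc with
  | nil => rfl
  | cons hd tl ih =>
    simp only [List.foldl_cons, List.map_cons]
    rw [ih]
    congr 1
    simp [combT, combE, Prod.ext_iff]

end Fold

def MiniProp (V : ∀ M : Type u, L.Structure M → Prop) : Prop :=
  ∀ e : EqId L,
    (∃ (B : Type u) (iB : L.Structure B), V B iB ∧ Nontrivial B ∧ @EqId.Holds L e B iB) →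
    ∀ (M : Type u) (iM : L.Structure M), V M iM → @EqId.Holds L e M iM

section Main

variable {V : ∀ M : Type u, L.Structure M → Prop} {t : L.Term (Fin 3)}
variable (tr : Transfers V t) (mini : MiniProp V)

include tr

lemma comb_eq_iff {M : Type u} [iM : L.Structure M] (hM : V M iM) (x y : M × M) :
    ((combE t M x y).1 = (combE t M x y).2) ↔ (x.1 = x.2 ∧ y.1 = y.2) := by
  constructor
  · intro h
    simp only [combE] at h
    have h1 : x.1 = x.2 := by
      calc x.1 = swfn t M x.1 x.2 x.1 (dfn t M x.1 x.2 y.1) := (vdec1 tr hM _ _ _).symm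
        _ = swfn t M x.1 x.2 x.1 (dfn t M x.2 x.1 y.2) := by rw [h]
        _ = x.2 := vdec2 tr hM _ _ _
    refine ⟨h1, ?_⟩
    rw [← h1] at h
    rw [vd1 tr hM, vd1 tr hM] at h
    exact h
  · rintro ⟨h1, h2⟩
    simp only [combE, h1, h2]

lemma fold_eq_iff {M : Type u} [iM : L.Structure M] (hM : V M iM)
    (l : List (M × M)) (acc : M × M) :
    (l.foldl (combE t M) acc).1 = (l.foldl (combE t M) acc).2
      ↔ (acc.1 = acc.2 ∧ ∀ p ∈ l, p.1 = p.2) := by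
  induction l generalizing acc with
  | nil => simp
  | cons hd tl ih =>
    simp only [List.foldl_cons, ih, comb_eq_iff tr hM, List.mem_cons]
    constructor
    · rintro ⟨⟨h1, h2⟩, h3⟩
      exact ⟨h1, fun p hp => hp.elim (fun e => e ▸ h2) (h3 p)⟩
    · rintro ⟨h1, h2⟩
      exact ⟨⟨h1, h2 hd (Or.inl rfl)⟩, fun p hp => h2 p (Or.inr hp)⟩

lemma premise_iff {M : Type u} [iM : L.Structure M] (hM : V M iM) {k n : ℕ}
    (lh rh : Fin n → L.Term (Fin k)) (cl : L.Term (Fin k)) (x : Fin k → M) :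
    ((List.ofFn fun i => (lh i, rh i)).foldl (combT t) (cl, cl)).1.realize x
        = ((List.ofFn fun i => (lh i, rh i)).foldl (combT t) (cl, cl)).2.realize x
      ↔ ∀ i, (lh i).realize x = (rh i).realize x := by
  have hfr := fold_realize t x (List.ofFn fun i => (lh i, rh i)) (cl, cl)
  have h1 := congrArg Prod.fst hfr
  have h2 := congrArg Prod.snd hfr
  simp only at h1 h2
  rw [h1, h2, fold_eq_iff tr hM]
  rw [List.map_ofFn]
  constructor
  · rintro ⟨-, h⟩ i
    exact h _ (List.mem_ofFn.mpr ⟨i, rfl⟩)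
  · intro h
    refine ⟨rfl, fun pp hpp => ?_⟩
    obtain ⟨i, rfl⟩ := List.mem_ofFn.mp hpp
    exact h i

include mini

lemma sat_contra {k : ℕ} (sS tS uT wT : L.Term (Fin k))
    {A : Type u} [iA : L.Structure A] (hA : V A iA) (hntA : Nontrivial A)
    (hqA : ∀ x : Fin k → A, sS.realize x = tS.realize x → uT.realize x = wT.realize x)
    (b : Fin k → A) (hb : sS.realize b = tS.realize b)
    {D : Type u} [iD : L.Structure D] (hD : V D iD) (d : Fin k → D)
    (hprem : sS.realize d = tS.realize d) (hne : uT.realize d ≠ wT.realize d) : False := by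
  have heqA : EqId.Holds ⟨k, dT t sS tS uT, dT t sS tS wT⟩ A := by
    intro a
    simp only [realize_dT]
    set α := sS.realize a with hα
    set β := tS.realize a with hβ
    set cb : Fin k → A := fun j => swfn t A α β (a j) (b j) with hcb
    have hpc : sS.realize cb = tS.realize cb := by
      rw [hcb, vterm_comm tr hA sS α β a b, vterm_comm tr hA tS α β a b, ← hα, ← hβ, hb]
      exact vsw_swap tr hA α β (tS.realize b)
    have hu : uT.realize cb = wT.realize cb := hqA cb hpc
    calc dfn t A α β (uT.realize a)
        = swfn t A α β (swfn t A α β (uT.realize a) (uT.realize b)) α :=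
          (vsw_decode tr hA _ _ _ _).symm
      _ = swfn t A α β (uT.realize cb) α := by rw [hcb, vterm_comm tr hA uT α β a b]
      _ = swfn t A α β (wT.realize cb) α := by rw [hu]
      _ = swfn t A α β (swfn t A α β (wT.realize a) (wT.realize b)) α := by
          rw [hcb, vterm_comm tr hA wT α β a b]
      _ = dfn t A α β (wT.realize a) := vsw_decode tr hA _ _ _ _
  have hD' := mini ⟨k, dT t sS tS uT, dT t sS tS wT⟩ ⟨A, iA, hA, hntA, heqA⟩ D iD hD d
  simp only [realize_dT, hprem] at hD'
  rw [vd1 tr hD, vd1 tr hD] at hD'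
  exact hne hD'

end Main

section Unsat

variable {V : ∀ M : Type u, L.Structure M → Prop} {t : L.Term (Fin 3)}
variable (tr : Transfers V t) (mini : MiniProp V) {SV : Set (EqId L)}
variable (hchar : ∀ (M : Type u) (iM : L.Structure M), V M iM ↔ ∀ e ∈ SV, @EqId.Holds L e M iM)

include tr mini hchar

lemma unsat_contra {k : ℕ} (sS tS uT wT : L.Term (Fin k))
    {A : Type u} [iA : L.Structure A] (hA : V A iA) (hntA : Nontrivial A)
    (hunsat : ∀ x : Fin k → A, sS.realize x ≠ tS.realize x)
    {D : Type u} [iD : L.Structure D] (hD : V D iD) (d : Fin k → D)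
    (hprem : sS.realize d = tS.realize d) (hne : uT.realize d ≠ wT.realize d) : False := by
  classical
  obtain ⟨μ, hμc, hμa, hμmax⟩ := exists_maximal_avoiding (L := L) (A := A)
      {pr | ∃ x : Fin k → A, pr = (sS.realize x, tS.realize x)}
      (by rintro pr ⟨x, rfl⟩; exact hunsat x)
  set B := QuotAlg μ hμc with hBdef
  have hBV : V B inferInstance := by
    rw [hchar]
    intro e he
    exact quot_eqid μ hμc e ((hchar A iA).mp hA e he)
  obtain ⟨a0, b0, hab⟩ := hntA
  have hBns : Nontrivial B := by
    refine ⟨Quotient.mk (congSetoid μ hμc) (sS.realize (fun _ => a0)),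
      Quotient.mk (congSetoid μ hμc) (tS.realize (fun _ => a0)), fun hEq => ?_⟩
    exact hμa _ ⟨(fun _ => a0), rfl⟩ (Quotient.exact hEq)
  have hBunsat : ∀ x : Fin k → B, sS.realize x ≠ tS.realize x := by
    intro x hx
    rw [realize_out μ hμc sS x, realize_out μ hμc tS x] at hx
    exact hμa _ ⟨(fun j => (x j).out), rfl⟩ (Quotient.exact hx)
  by_cases hcase : ∀ (x : Fin k → B) (z : B), dfn t B (sS.realize x) (tS.realize x) z = sS.realize x
  · -- the identity `ι` holds in the nontrivial algebra B, hence throughout V, contradicting D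
    have hι : EqId.Holds ⟨k + 1, dT t (sS.relabel Fin.castSucc) (tS.relabel Fin.castSucc)
        (.var (Fin.last k)), sS.relabel Fin.castSucc⟩ B := by
      intro v
      simp only [realize_dT, Term.realize_relabel, Term.realize_var]
      exact hcase (v ∘ Fin.castSucc) (v (Fin.last k))
    have hD' := mini _ ⟨B, inferInstance, hBV, hBns, hι⟩ D iD hD
    have h1 := hD' (Fin.snoc d (uT.realize d))
    have h2 := hD' (Fin.snoc d (wT.realize d))
    simp only [realize_dT, Term.realize_relabel, Term.realize_var, Fin.snoc_last] at h1 h2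
    have hcomp1 : ((Fin.snoc d (uT.realize d) : Fin (k + 1) → D) ∘ Fin.castSucc) = d :=
      funext fun i => Fin.snoc_castSucc _ _ i
    have hcomp2 : ((Fin.snoc d (wT.realize d) : Fin (k + 1) → D) ∘ Fin.castSucc) = d :=
      funext fun i => Fin.snoc_castSucc _ _ i
    rw [hcomp1] at h1
    rw [hcomp2] at h2
    rw [hprem, vd1 tr hD] at h1 h2
    exact hne (h1.trans h2.symm)
  · push_neg at hcase
    obtain ⟨x, z, hz⟩ := hcase
    set p := sS.realize x with hp
    set q := tS.realize x with hq
    have hex : ∃ w0 z0 : B, swfn t B p q w0 z0 ≠ z0 := by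
      by_contra hσ
      push_neg at hσ
      apply hz
      have hpq : ∀ g h' : B, dfn t B p q g = dfn t B p q h' := by
        intro g h'
        have e1 : dfn t B p q g = swfn t B p q g (dfn t B p q h') := by
          show dfn t B p q g
            = dfn t B (dfn t B p q g) (dfn t B p q (dfn t B p q h')) (dfn t B p q h')
          rw [vd_idem tr hBV p q h']
          exact (vd3 tr hBV _ _).symm
        rw [e1, hσ g (dfn t B p q h')]
      have hfin := hpq z p
      rw [vd2 tr hBV p q] at hfin
      exact hfin
    obtain ⟨w0, z0, hw0⟩ := hex
    set ψ : Set (A × A) := {pr | swfn t B p q p (Quotient.mk (congSetoid μ hμc) pr.1)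
        = swfn t B p q p (Quotient.mk (congSetoid μ hμc) pr.2)} with hψdef
    have hψc : IsCongSet (L := L) A ψ := by
      refine ⟨⟨fun x => rfl, fun h => h.symm, fun h h' => h.trans h'⟩, ?_⟩
      intro m f a b habm
      show swfn t B p q p (Quotient.mk (congSetoid μ hμc) (Structure.funMap f a))
        = swfn t B p q p (Quotient.mk (congSetoid μ hμc) (Structure.funMap f b))
      rw [mk_funMap, mk_funMap,
        vfun_comm tr hBV f p q (fun i => Quotient.mk (congSetoid μ hμc) (a i)),
        vfun_comm tr hBV f p q (fun i => Quotient.mk (congSetoid μ hμc) (b i))]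
      congr 1
      congr 1
      funext i
      exact habm i
    have hψμ : μ ⊆ ψ := by
      intro pr hpr
      show swfn t B p q p _ = swfn t B p q p _
      rw [Quotient.sound (s := congSetoid μ hμc) hpr]
    have hψne : ψ ≠ μ := by
      intro hEq
      have hmem : ((z0.out, (swfn t B p q w0 z0).out) : A × A) ∈ ψ := by
        show swfn t B p q p (Quotient.mk (congSetoid μ hμc) z0.out)
          = swfn t B p q p (Quotient.mk (congSetoid μ hμc) (swfn t B p q w0 z0).out)
        rw [Quotient.out_eq, Quotient.out_eq]
        exact (vsw_absorb tr hBV p q w0 z0).symm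
      rw [hEq] at hmem
      have : z0 = swfn t B p q w0 z0 := by
        have h' := Quotient.sound (s := congSetoid μ hμc) hmem
        rwa [Quotient.out_eq, Quotient.out_eq] at h'
      exact hw0 this.symm
    have hψhit : ¬ (∀ pr ∈ {pr : A × A | ∃ x : Fin k → A, pr = (sS.realize x, tS.realize x)},
        pr ∉ ψ) := fun hav => hψne (hμmax ψ hψc hav hψμ)
    push_neg at hψhit
    obtain ⟨pr, hprP, hpr⟩ := hψhit
    obtain ⟨a, rfl⟩ := hprP
    set x3 : Fin k → B := fun i => Quotient.mk (congSetoid μ hμc) (a i) with hx3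
    set p3 := sS.realize x3 with hp3
    set q3 := tS.realize x3 with hq3
    have hϖeq : swfn t B p q p p3 = swfn t B p q p q3 := by
      rw [hp3, hq3, hx3, realize_mk μ hμc sS a, realize_mk μ hμc tS a]
      exact hpr
    set ch : Fin k → B := fun j => swfn t B p3 q3 (x3 j) (x j) with hch
    apply hBunsat ch
    rw [hch, vterm_comm tr hBV sS p3 q3 x3 x, vterm_comm tr hBV tS p3 q3 x3 x,
      ← hp3, ← hq3, ← hp, ← hq, ← vsw_swap tr hBV p3 q3 q,
      vG1 tr hBV p q p3 q3, vG2 tr hBV p q p3 q3, hϖeq]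

end Unsat

end MDV

open MDV in
theorem stmt_10 {L : FirstOrder.Language.{u, u}} [L.IsAlgebraic]
    (V : ∀ M : Type u, L.Structure M → Prop)
    (hD : IsDiscriminatorVariety V) (hmin : IsMinimalVariety V) :
    IsMinimalQuasivariety V := by
  classical
  obtain ⟨K, t, hKd, hVv, hKV, hleast⟩ := hD
  obtain ⟨SV, hchar⟩ := hVv
  have tr : MDV.Transfers V t := by
    intro e hval M iM hM
    have hW : SubclassOf V (fun N iN => ∀ e' ∈ insert e SV, @EqId.Holds L e' N iN) := by
      apply hleast
      · exact ⟨insert e SV, fun _ _ => Iff.rfl⟩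
      · intro N iN hN e' he'
        rcases Set.mem_insert_iff.mp he' with rfl | hmem
        · exact hval N iN (hKd N iN hN)
        · exact (hchar N iN).mp (hKV N iN hN) e' hmem
    exact hW M iM hM e (Set.mem_insert _ _)
  have mini : MDV.MiniProp V := by
    rintro e ⟨B, iB, hBV, hBns, hBe⟩ M iM hM
    rcases hmin.2 (fun N iN => ∀ e' ∈ insert e SV, @EqId.Holds L e' N iN)
        ⟨insert e SV, fun _ _ => Iff.rfl⟩
        (fun N iN hN => (hchar N iN).mpr (fun e' he' => hN e' (Set.mem_insert_of_mem _ he')))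
        with hleft | hright
    · refine absurd (hleft B iB (fun e' he' => ?_)) (not_subsingleton_iff_nontrivial.mpr hBns)
      rcases Set.mem_insert_iff.mp he' with rfl | hmem
      · exact hBe
      · exact (hchar B iB).mp hBV e' hmem
    · exact ((hright M iM).mp hM) e (Set.mem_insert _ _)
  refine ⟨hmin.1, ?_⟩
  intro Q' hQ' hsub
  obtain ⟨S', hS'⟩ := hQ'
  by_cases hall : ∀ (M : Type u) (iM : L.Structure M), Q' M iM → Subsingleton M
  · exact Or.inl hall
  · push_neg at hall
    obtain ⟨A, iA, hAQ, hAns⟩ := hall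
    have hntA : Nontrivial A := hAns
    have hAV : V A iA := hsub A iA hAQ
    refine Or.inr (fun M iM => ⟨fun hM => (hS' M iM).mpr ?_, fun hM' => hsub M iM hM'⟩)
    intro q hqS x hx
    have hqA : @QuasiId.Holds L q A iA := (hS' A iA).mp hAQ q hqS
    by_cases hbig : ∀ (N : Type u) (iN : L.Structure N), V N iN → ∀ y : Fin q.k → N,
        ((List.ofFn fun i => (q.lhs i, q.rhs i)).foldl (MDV.combT t) (q.cl, q.cl)).1.realize y
            = ((List.ofFn fun i => (q.lhs i, q.rhs i)).foldl (MDV.combT t) (q.cl, q.cl)).2.realize y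
          → q.cl.realize y = q.cr.realize y
    · exact hbig M iM hM x ((premise_iff tr hM q.lhs q.rhs q.cl x).mpr hx)
    · exfalso
      push_neg at hbig
      obtain ⟨D, iD, hDV, d, hdp, hdne⟩ := hbig
      by_cases hsat : ∃ b : Fin q.k → A,
          ((List.ofFn fun i => (q.lhs i, q.rhs i)).foldl (MDV.combT t) (q.cl, q.cl)).1.realize b
            = ((List.ofFn fun i => (q.lhs i, q.rhs i)).foldl (MDV.combT t) (q.cl, q.cl)).2.realize b
      · obtain ⟨b, hb⟩ := hsat
        exact sat_contra tr mini _ _ q.cl q.cr hAV hntA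
          (fun y hy => hqA y ((premise_iff tr hAV q.lhs q.rhs q.cl y).mp hy)) b hb hDV d hdp hdne
      · push_neg at hsat
        exact unsat_contra tr mini hchar _ _ q.cl q.cr hAV hntA hsat hDV d hdp hdne
end
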